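/- arXiv:1503.06165 — 4 statements merged into one kernel-verified Lean document; each statement's English description precedes it below -/
import Mathlib

section
/- Let W be a neighborhood of 0 in ℂ, and let f₁ and f₂ be functions that are analytic at 0 and map W ∩ ℍ into ℍ, with f₁(0) = 0. Suppose one of f₁, f₂ has order of contact N with ℝ at 0 and the other maps some open real interval containing 0 into ℝ. Then f₂ ∘ f₁ has order of contact N with ℝ at 0. -/
open Complex Filter Set Topology Asymptotics Metric Polynomial

noncomputable section

/-- The open upper half-plane, as a subset of `ℂ`. -/
def UHP : Set ℂ := {z : ℂ | 0 < z.im}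

/-- `f` has order of contact `c` with `ℝ` at `0` (half-plane version). -/
def HalfPlaneContact (f : ℂ → ℂ) (c : ℝ) : Prop :=
  (f 0).im = 0 ∧
  ∃ m M δ : ℝ, 0 < m ∧ m ≤ M ∧ 0 < δ ∧
    ∀ x : ℝ, 0 < |x| → |x| < δ →
      m ≤ (f (x : ℂ)).im / ‖f 0 - f (x : ℂ)‖ ^ c ∧
      (f (x : ℂ)).im / ‖f 0 - f (x : ℂ)‖ ^ c ≤ M

/-- `φ` has order of contact `c` with `∂𝔻` at `ζ` (disk version). -/
def DiskContact (φ : ℂ → ℂ) (ζ : ℂ) (c : ℝ) : Prop :=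
  ‖φ ζ‖ = 1 ∧
  ∃ m M δ : ℝ, 0 < m ∧ m ≤ M ∧ 0 < δ ∧
    ∀ η : ℂ, ‖η‖ = 1 → η ≠ ζ → ‖η - ζ‖ < δ →
      m ≤ (1 - ‖φ η‖ ^ 2) / ‖φ ζ - φ η‖ ^ c ∧
      (1 - ‖φ η‖ ^ 2) / ‖φ ζ - φ η‖ ^ c ≤ M

/-- The Pick class `𝒫`: analytic on `ℍ` with nonnegative imaginary part there. -/
def InPick (f : ℂ → ℂ) : Prop :=
  DifferentiableOn ℂ f UHP ∧ ∀ z ∈ UHP, 0 ≤ (f z).im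

/-- The class `𝒫₀`: members of `𝒫` that extend analytically to a neighborhood of `0`. -/
def InPick0 (f : ℂ → ℂ) : Prop := InPick f ∧ AnalyticAt ℂ f 0

/-- The `k`-th Taylor coefficient of `f` at `0`. -/
def taylorCoeff (f : ℂ → ℂ) (k : ℕ) : ℂ := iteratedDeriv k f 0 / (Nat.factorial k : ℂ)

/-- The Hankel matrix `H_m(a₁, …, a_{2m−1})` with `(i,j)` entry `a_{i+j+1}` (0-based). -/
def hankel (a : ℕ → ℂ) (m : ℕ) : Matrix (Fin m) (Fin m) ℂ :=
  Matrix.of fun i j => a (i.1 + j.1 + 1)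

/-- The linear fractional transformation associated with a 2×2 matrix. -/
def lftApply (M : Matrix (Fin 2) (Fin 2) ℂ) (h : ℂ) : ℂ :=
  (M 0 0 * h + M 0 1) / (M 1 0 * h + M 1 1)

/-- The augmentation matrix `A(a₀, a₁)(z)`. -/
def augMatrix (a₀ a₁ : ℝ) (z : ℂ) : Matrix (Fin 2) (Fin 2) ℂ :=
  !![(a₀ : ℂ) * (a₁ : ℂ) * z, -(a₀ : ℂ) - (a₁ : ℂ) * z; (a₁ : ℂ) * z, -1]

/-- The product `A(s₀,t₀)(z) A(s₁,t₁)(z) ⋯ A(s_{m−1},t_{m−1})(z)`. -/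
def augProdN (m : ℕ) (s t : ℕ → ℝ) (z : ℂ) : Matrix (Fin 2) (Fin 2) ℂ :=
  (List.ofFn fun i : Fin m => augMatrix (s i.1) (t i.1) z).prod

/-- The conformal map `τ_α : 𝔻 → ℍ`, `τ_α(z) = i(α − z)/(α + z)`. -/
def cayley (α z : ℂ) : ℂ := Complex.I * (α - z) / (α + z)

/-- The inverse `τ_α⁻¹ : ℍ → 𝔻`, `τ_α⁻¹(w) = α(i − w)/(i + w)`. -/
def cayleyInv (α w : ℂ) : ℂ := α * (Complex.I - w) / (Complex.I + w)

/-- The exterior map `φ_e = ρ ∘ φ ∘ ρ`, where `ρ(z) = 1/conj(z)`. -/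
def extMap (φ : ℂ → ℂ) (z : ℂ) : ℂ :=
  ((starRingEnd ℂ) (φ (((starRingEnd ℂ) z)⁻¹)))⁻¹

lemma rpow_bracket {s t q N : ℝ} (hs : 0 < s) (hq1 : s ≤ q) (hq2 : q ≤ t) :
    min (s ^ N) (t ^ N) ≤ q ^ N ∧ q ^ N ≤ max (s ^ N) (t ^ N) := by
  rcases le_or_gt 0 N with hN | hN
  · exact ⟨(min_le_left _ _).trans (Real.rpow_le_rpow hs.le hq1 hN),
      (Real.rpow_le_rpow (hs.le.trans hq1) hq2 hN).trans (le_max_right _ _)⟩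
  · exact ⟨(min_le_right _ _).trans (Real.rpow_le_rpow_of_nonpos (hs.trans_le hq1) hq2 hN.le),
      (Real.rpow_le_rpow_of_nonpos hs hq1 hN.le).trans (le_max_left _ _)⟩

lemma ofReal_mul_im' (r : ℝ) (z : ℂ) : ((r:ℂ) * z).im = r * z.im := by
  simp [Complex.mul_im]

set_option maxHeartbeats 1000000 in
lemma key_lemma (W : Set ℂ) (hW : W ∈ 𝓝 (0:ℂ)) (g : ℂ → ℂ) (hg : AnalyticAt ℂ g 0)
    (hgW : ∀ z ∈ W ∩ UHP, 0 < (g z).im)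
    {ε : ℝ} (hε : 0 < ε) (hreal : ∀ x : ℝ, |x| < ε → (g (x:ℂ)).im = 0) :
    ∃ a r : ℝ, 0 < a ∧ 0 < r ∧
      ∀ w : ℂ, ‖w‖ ≤ r → 0 < w.im →
        (a/4) * w.im ≤ (g w - g 0).im ∧ (g w - g 0).im ≤ 2*a * w.im ∧
        (a/2) * ‖w‖ ≤ ‖g w - g 0‖ ∧
        ‖g w - g 0‖ ≤ 2*a * ‖w‖ := by
  set h : ℂ → ℂ := fun z => g z - g 0 with hh_def
  have hg0 : (g 0).im = 0 := by
    have := hreal 0 (by simpa using hε); simpa using this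
  have him : ∀ z, (h z).im = (g z).im := by
    intro z; simp [hh_def, hg0]
  have hh : AnalyticAt ℂ h 0 := hg.sub analyticAt_const
  -- points i t approach 0 inside W ∩ UHP
  have htend : Tendsto (fun t : ℝ => (t:ℂ) * Complex.I) (𝓝[>] (0:ℝ)) (𝓝 (0:ℂ)) := by
    have : Tendsto (fun t : ℝ => (t:ℂ) * Complex.I) (𝓝 (0:ℝ)) (𝓝 (0:ℂ)) := by
      simpa using (Complex.continuous_ofReal.tendsto 0).mul_const Complex.I
    exact this.mono_left nhdsWithin_le_nhds
  have hUHP : ∀ t : ℝ, 0 < t → (t:ℂ) * Complex.I ∈ UHP := by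
    intro t ht; simp [UHP, ht]
  -- h is not eventually zero
  have hnev : ¬ (∀ᶠ z in 𝓝 (0:ℂ), h z = 0) := by
    intro hev
    have h1 : ∀ᶠ t : ℝ in 𝓝[>] (0:ℝ), (t:ℂ) * Complex.I ∈ W := htend.eventually_mem hW
    have h2 : ∀ᶠ t : ℝ in 𝓝[>] (0:ℝ), h ((t:ℂ) * Complex.I) = 0 := htend.eventually hev
    obtain ⟨t, ht⟩ := ((h1.and h2).and self_mem_nhdsWithin).exists
    have hpos : 0 < (h ((t:ℂ) * Complex.I)).im := by
      rw [him]
      exact hgW _ ⟨ht.1.1, hUHP t ht.2⟩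
    rw [ht.1.2] at hpos; simp at hpos
  -- order and factorization
  have hord : analyticOrderAt h 0 ≠ ⊤ := by
    rw [ne_eq, analyticOrderAt_eq_top]; exact hnev
  obtain ⟨n, hn⟩ := ENat.ne_top_iff_exists.mp hord
  obtain ⟨u, hu, hu0, huv⟩ := (hh.analyticOrderAt_eq_natCast (n := n)).mp hn.symm
  have hn1 : 1 ≤ n := by
    rcases Nat.eq_zero_or_pos n with h0 | h1
    · exfalso; apply hu0
      have := huv.self_of_nhds
      simp [hh_def, h0] at this
      exact this.symm
    · exact h1
  obtain ⟨r₀, hr₀, hfac⟩ := Metric.eventually_nhds_iff.mp huv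
  have hfac' : ∀ z : ℂ, ‖z‖ < r₀ → h z = z ^ n * u z := by
    intro z hz
    have := hfac (y := z) (by simpa [Complex.dist_eq] using hz)
    simpa [smul_eq_mul] using this
  -- u is real on the real axis near 0
  have hureal : ∀ x : ℝ, 0 < |x| → |x| < min ε r₀ → (u (x:ℂ)).im = 0 := by
    intro x hx0 hx
    have hxr : ‖(x:ℂ)‖ < r₀ := by
      simpa using hx.trans_le (min_le_right _ _)
    have heq := hfac' (x:ℂ) hxr
    have hre : (h (x:ℂ)).im = 0 := by
      rw [him]; exact hreal x (hx.trans_le (min_le_left _ _))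
    have hcast : ((x:ℂ)) ^ n = ((x ^ n : ℝ) : ℂ) := by push_cast; ring
    rw [heq, hcast] at hre
    rw [Complex.mul_im, Complex.ofReal_re, Complex.ofReal_im, zero_mul, add_zero] at hre
    have hxn : x ^ n ≠ 0 := pow_ne_zero _ (by simpa [abs_pos] using hx0)
    exact (mul_eq_zero.mp hre).resolve_left hxn
  have hu0im : (u 0).im = 0 := by
    have hcont : Tendsto (fun x : ℝ => (u (x:ℂ)).im) (𝓝[≠] (0:ℝ)) (𝓝 ((u 0).im)) := by
      have h1 : ContinuousAt (fun x : ℝ => u (x:ℂ)) 0 := by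
        refine ContinuousAt.comp ?_ Complex.continuous_ofReal.continuousAt
        simpa using hu.continuousAt
      have : ContinuousAt (fun x : ℝ => (u (x:ℂ)).im) 0 :=
        Complex.continuous_im.continuousAt.comp h1
      simpa using this.continuousWithinAt.tendsto
    have hev : ∀ᶠ x : ℝ in 𝓝[≠] (0:ℝ), (fun x : ℝ => (u (x:ℂ)).im) x = 0 := by
      have hmem : {x : ℝ | |x| < min ε r₀} ∈ 𝓝[≠] (0:ℝ) := by
        apply nhdsWithin_le_nhds
        have : {x : ℝ | |x| < min ε r₀} = Metric.ball (0:ℝ) (min ε r₀) := by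
          ext x; simp [Real.dist_eq]
        rw [this]
        exact Metric.ball_mem_nhds _ (lt_min hε hr₀)
      filter_upwards [hmem, self_mem_nhdsWithin] with x hx hx'
      exact hureal x (by simpa [abs_pos] using hx') hx
    exact (tendsto_nhds_unique (hcont.congr' (by filter_upwards [hev] with x hx; rw [hx]))
      tendsto_const_nhds)
  set a : ℝ := (u 0).re with ha_def
  have hu0a : u 0 = (a:ℂ) := by
    apply Complex.ext <;> simp [ha_def, hu0im]
  have ha0 : a ≠ 0 := by
    intro h0; apply hu0; rw [hu0a, h0]; simp
  -- the angular positivity condition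
  have key2 : ∀ θ : ℝ, 0 < θ → θ < Real.pi → 0 ≤ a * Real.sin (n * θ) := by
    intro θ hθ0 hθπ
    have hsin : 0 < Real.sin θ := Real.sin_pos_of_pos_of_lt_pi hθ0 hθπ
    set e : ℂ := Complex.exp (θ * Complex.I) with he_def
    have htend2 : Tendsto (fun t : ℝ => (t:ℂ) * e) (𝓝[>] (0:ℝ)) (𝓝 (0:ℂ)) := by
      have : Tendsto (fun t : ℝ => (t:ℂ) * e) (𝓝 (0:ℝ)) (𝓝 (0:ℂ)) := by
        simpa using (Complex.continuous_ofReal.tendsto 0).mul_const e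
      exact this.mono_left nhdsWithin_le_nhds
    have hF : Tendsto (fun t : ℝ => (e ^ n * u ((t:ℂ) * e)).im) (𝓝[>] (0:ℝ))
        (𝓝 ((e ^ n * u 0).im)) := by
      have : ContinuousAt (fun z : ℂ => (e ^ n * u z).im) 0 :=
        Complex.continuous_im.continuousAt.comp (continuousAt_const.mul hu.continuousAt)
      exact (this.tendsto.comp htend2)
    have hFpos : ∀ᶠ t : ℝ in 𝓝[>] (0:ℝ), 0 ≤ (e ^ n * u ((t:ℝ) * e)).im := by
      have h1 : ∀ᶠ t : ℝ in 𝓝[>] (0:ℝ), (t:ℂ) * e ∈ W := htend2.eventually_mem hW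
      have h2 : ∀ᶠ t : ℝ in 𝓝[>] (0:ℝ), ‖(t:ℂ) * e‖ < r₀ := by
        have := htend2.eventually (Metric.eventually_nhds_iff.mpr
          ⟨r₀, hr₀, fun {y} hy => by simpa [Complex.dist_eq] using hy⟩)
        simpa [Complex.dist_eq] using this
      filter_upwards [h1, h2, self_mem_nhdsWithin] with t h1t h2t ht
      have him_e : e.im = Real.sin θ := by
        simp [he_def, Complex.exp_ofReal_mul_I_im]
      have htim : 0 < ((t:ℂ) * e).im := by
        rw [ofReal_mul_im', him_e]
        exact mul_pos ht hsin
      have hWz : 0 < (h ((t:ℂ) * e)).im := by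
        rw [him]; exact hgW _ ⟨h1t, htim⟩
      rw [hfac' _ h2t, mul_pow, ← Complex.ofReal_pow, mul_assoc,
        ofReal_mul_im'] at hWz
      by_contra hcon
      push_neg at hcon
      nlinarith [pow_pos (show (0:ℝ) < t from ht) n]
    have hlim : 0 ≤ (e ^ n * u 0).im := ge_of_tendsto hF hFpos
    have : (e ^ n * u 0).im = a * Real.sin (n * θ) := by
      rw [hu0a, mul_comm, ofReal_mul_im']
      congr 1
      rw [he_def, ← Complex.exp_nat_mul]
      have : (n : ℂ) * ((θ:ℝ) * Complex.I) = ((n * θ : ℝ) : ℂ) * Complex.I := by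
        push_cast; ring
      rw [this, Complex.exp_ofReal_mul_I_im]
    linarith [hlim, this ▸ hlim]
  have hnpos : (0:ℝ) < (n:ℝ) := by exact_mod_cast hn1
  have hapos : 0 < a := by
    rcases ha0.lt_or_gt with hneg | hpos
    · exfalso
      have hθ : (0:ℝ) < Real.pi / (2*n) := by positivity
      have hn1' : (1:ℝ) ≤ (n:ℝ) := by exact_mod_cast hn1
      have hθπ : Real.pi / (2*n) < Real.pi := by
        rw [div_lt_iff₀ (by positivity)]
        nlinarith [Real.pi_pos]
      have hk := key2 _ hθ hθπ
      have hs : (n:ℝ) * (Real.pi/(2*n)) = Real.pi/2 := by field_simp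
      rw [hs, Real.sin_pi_div_two, mul_one] at hk
      linarith
    · exact hpos
  have hn_eq : n = 1 := by
    by_contra hne
    have hn2 : 2 ≤ n := by omega
    have hn2' : (2:ℝ) ≤ (n:ℝ) := by exact_mod_cast hn2
    have hθ : (0:ℝ) < 3*Real.pi / (2*n) := by positivity
    have hθπ : 3*Real.pi/(2*n) < Real.pi := by
      rw [div_lt_iff₀ (by positivity)]
      nlinarith [Real.pi_pos]
    have hk := key2 _ hθ hθπ
    have hs : (n:ℝ) * (3*Real.pi/(2*n)) = Real.pi + Real.pi/2 := by
      field_simp; ring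
    have hsinval : Real.sin (Real.pi + Real.pi/2) = -1 := by
      rw [Real.sin_add]; simp
    rw [hs, hsinval] at hk
    linarith
  -- Lipschitz bound for u near 0
  obtain ⟨r₁, hr₁, hanal⟩ := Metric.eventually_nhds_iff.mp hu.eventually_analyticAt
  set ρ : ℝ := min (r₀/2) (r₁/2) with hρ_def
  have hρpos : 0 < ρ := lt_min (by linarith) (by linarith)
  have hanal' : ∀ z ∈ Metric.closedBall (0:ℂ) ρ, AnalyticAt ℂ u z := by
    intro z hz
    apply hanal
    have : dist z 0 ≤ ρ := Metric.mem_closedBall.mp hz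
    calc dist z 0 ≤ ρ := this
    _ ≤ r₁/2 := min_le_right _ _
    _ < r₁ := by linarith
  have hderiv_cont : ContinuousOn (deriv u) (Metric.closedBall (0:ℂ) ρ) := by
    intro z hz
    have h1 : ContinuousAt (fderiv ℂ u) z := ((hanal' z hz).fderiv).continuousAt
    have h2 : ContinuousAt (fun w => fderiv ℂ u w 1) z :=
      (ContinuousLinearMap.apply ℂ ℂ (1:ℂ)).continuous.continuousAt.comp h1
    have h3 : (fun w => fderiv ℂ u w 1) = deriv u := by
      funext w; exact fderiv_apply_one_eq_deriv
    rw [← h3]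
    exact h2.continuousWithinAt
  obtain ⟨C, hC⟩ := (isCompact_closedBall (0:ℂ) ρ).exists_bound_of_continuousOn hderiv_cont
  have hC0 : 0 ≤ C := le_trans (norm_nonneg _) (hC 0 (Metric.mem_closedBall_self hρpos.le))
  have hMVT : ∀ x ∈ Metric.closedBall (0:ℂ) ρ, ∀ y ∈ Metric.closedBall (0:ℂ) ρ,
      ‖u y - u x‖ ≤ C * ‖y - x‖ := by
    intro x hx y hy
    refine (convex_closedBall _ _).norm_image_sub_le_of_norm_hasFDerivWithin_le
      (f' := fun z => ContinuousLinearMap.smulRight (1 : ℂ →L[ℂ] ℂ) (deriv u z)) ?_ ?_ hx hy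
    · intro z hz
      exact ((hanal' z hz).differentiableAt.hasDerivAt).hasFDerivAt.hasFDerivWithinAt
    · intro z hz
      rw [ContinuousLinearMap.norm_smulRight_apply]
      calc ‖(1 : ℂ →L[ℂ] ℂ)‖ * ‖deriv u z‖ ≤ 1 * ‖deriv u z‖ := by
            apply mul_le_mul_of_nonneg_right _ (norm_nonneg _)
            simpa using ContinuousLinearMap.norm_id_le (α := ℂ)
      _ = ‖deriv u z‖ := one_mul _
      _ ≤ C := hC z hz
  have hureal' : ∀ x : ℝ, |x| < min ε r₀ → (u (x:ℂ)).im = 0 := by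
    intro x hx
    rcases eq_or_ne x 0 with rfl | hne
    · simpa using hu0im
    · exact hureal x (abs_pos.mpr hne) hx
  obtain ⟨r₂, hr₂, hur⟩ := Metric.eventually_nhds_iff.mp
    (hu.continuousAt.eventually_mem (Metric.ball_mem_nhds (u 0) (show (0:ℝ) < a/4 by linarith)))
  set r : ℝ := min (min ρ (min ε r₀ / 2)) (min (r₂/2) (a/(4*(C+1)))) with hr_def
  have hεr₀ : 0 < min ε r₀ := lt_min hε hr₀
  have hrpos : 0 < r := by
    apply lt_min (lt_min hρpos (by linarith)) (lt_min (by linarith) (by positivity))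
  refine ⟨a, r, hapos, hrpos, ?_⟩
  intro w hwr hwim
  have hwρ : ‖w‖ ≤ ρ := hwr.trans ((min_le_left _ _).trans (min_le_left _ _))
  have hwr₀ : ‖w‖ < r₀ := by
    have : ρ ≤ r₀/2 := min_le_left _ _
    linarith [hwρ]
  have hwr₂ : ‖w‖ < r₂ := by
    have : r ≤ r₂/2 := (min_le_right _ _).trans (min_le_left _ _)
    linarith [hwr]
  have hwC : ‖w‖ * C ≤ a/4 := by
    have h1 : r ≤ a/(4*(C+1)) := (min_le_right _ _).trans (min_le_right _ _)
    have h2 : ‖w‖ * C ≤ (a/(4*(C+1))) * C :=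
      mul_le_mul_of_nonneg_right (hwr.trans h1) hC0
    calc ‖w‖ * C ≤ (a/(4*(C+1))) * C := h2
    _ ≤ a/4 := by
        rw [div_mul_eq_mul_div, div_le_div_iff₀ (by positivity) (by norm_num)]
        nlinarith
  -- u(w) close to a
  have hu_close : ‖u w - u 0‖ ≤ a/4 := by
    have := hur (y := w) (by simpa [Complex.dist_eq] using hwr₂)
    rw [Metric.mem_ball, Complex.dist_eq] at this
    exact this.le
  have hre_u : 3*a/4 ≤ (u w).re ∧ (u w).re ≤ 5*a/4 := by
    have h1 : |(u w - u 0).re| ≤ ‖u w - u 0‖ := Complex.abs_re_le_norm _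
    have h2 : (u w - u 0).re = (u w).re - a := by rw [hu0a]; simp
    rw [h2] at h1
    have := abs_le.mp (h1.trans hu_close)
    constructor <;> linarith [this.1, this.2]
  have habs_u : a/2 ≤ ‖u w‖ ∧ ‖u w‖ ≤ 2*a := by
    have h0 : ‖u 0‖ = a := by rw [hu0a]; simpa using abs_of_pos hapos
    have e1 := norm_sub_norm_le (u w) (u 0)
    have e2 := norm_sub_norm_le (u 0) (u w)
    rw [norm_sub_rev] at e2
    rw [h0] at e1 e2
    constructor <;> linarith [hu_close]
  -- imaginary part of u(w) is small
  have himu : |(u w).im| ≤ C * w.im := by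
    have hwre : ((w.re:ℝ):ℂ) ∈ Metric.closedBall (0:ℂ) ρ := by
      rw [Metric.mem_closedBall, Complex.dist_eq, sub_zero]
      calc ‖((w.re:ℝ):ℂ)‖ = |w.re| := Complex.norm_real _
      _ ≤ ‖w‖ := Complex.abs_re_le_norm w
      _ ≤ ρ := hwρ
    have hwmem : w ∈ Metric.closedBall (0:ℂ) ρ := by
      rwa [Metric.mem_closedBall, Complex.dist_eq, sub_zero]
    have hMV := hMVT _ hwre _ hwmem
    have hdiff : w - ((w.re:ℝ):ℂ) = (w.im : ℂ) * Complex.I := by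
      apply Complex.ext <;> simp
    have hnorm : ‖w - ((w.re:ℝ):ℂ)‖ = w.im := by
      rw [hdiff]
      simp [abs_of_pos hwim]
    have hre_real : (u ((w.re:ℝ):ℂ)).im = 0 := by
      apply hureal'
      calc |w.re| ≤ ‖w‖ := Complex.abs_re_le_norm w
      _ ≤ r := hwr
      _ ≤ min ε r₀ / 2 := (min_le_left _ _).trans (min_le_right _ _)
      _ < min ε r₀ := by linarith
    calc |(u w).im| = |(u w - u ((w.re:ℝ):ℂ)).im| := by rw [Complex.sub_im, hre_real, sub_zero]
    _ ≤ ‖u w - u ((w.re:ℝ):ℂ)‖ := Complex.abs_im_le_norm _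
    _ = ‖u w - u ((w.re:ℝ):ℂ)‖ := rfl
    _ ≤ C * ‖w - ((w.re:ℝ):ℂ)‖ := hMV
    _ = C * w.im := by rw [hnorm]
  -- the factorization at w
  have hfw : g w - g 0 = w * u w := by
    have := hfac' w hwr₀
    rw [hn_eq, pow_one] at this
    exact this
  have hcross : |w.re * (u w).im| ≤ (a/4) * w.im := by
    rw [abs_mul]
    calc |w.re| * |(u w).im| ≤ ‖w‖ * (C * w.im) :=
        mul_le_mul (Complex.abs_re_le_norm w) himu (abs_nonneg _) (norm_nonneg _)
    _ = (‖w‖ * C) * w.im := by ring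
    _ ≤ (a/4) * w.im := mul_le_mul_of_nonneg_right hwC hwim.le
  have him_eq : (g w - g 0).im = w.re * (u w).im + w.im * (u w).re := by
    rw [hfw, Complex.mul_im]
  refine ⟨?_, ?_, ?_, ?_⟩
  · rw [him_eq]
    have := abs_le.mp hcross
    nlinarith [hre_u.1, hwim]
  · rw [him_eq]
    have := abs_le.mp hcross
    nlinarith [hre_u.2, hwim]
  · rw [hfw, norm_mul]
    calc (a/2) * ‖w‖ = ‖w‖ * (a/2) := by ring
    _ ≤ ‖w‖ * ‖u w‖ :=
        mul_le_mul_of_nonneg_left habs_u.1 (norm_nonneg _)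
  · rw [hfw, norm_mul]
    calc ‖w‖ * ‖u w‖ ≤ ‖w‖ * (2*a) :=
        mul_le_mul_of_nonneg_left habs_u.2 (norm_nonneg _)
    _ = 2*a * ‖w‖ := by ring


set_option maxHeartbeats 1600000 in
/-- if one of `f₁`, `f₂` has order of contact `N` with `ℝ` at `0` and the other
maps an open real interval containing `0` into `ℝ`, then `f₂ ∘ f₁` has order of contact `N`. -/
theorem contact_of_comp_real
    (W : Set ℂ) (hW : W ∈ 𝓝 (0 : ℂ)) (f₁ f₂ : ℂ → ℂ)
    (hf₁a : AnalyticAt ℂ f₁ 0) (hf₂a : AnalyticAt ℂ f₂ 0)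
    (hf₁m : ∀ z ∈ W ∩ UHP, f₁ z ∈ UHP) (hf₂m : ∀ z ∈ W ∩ UHP, f₂ z ∈ UHP)
    (hf₁0 : f₁ 0 = 0) (N : ℝ)
    (hc : (HalfPlaneContact f₁ N ∧ ∃ ε > 0, ∀ x : ℝ, |x| < ε → (f₂ (x : ℂ)).im = 0) ∨
          (HalfPlaneContact f₂ N ∧ ∃ ε > 0, ∀ x : ℝ, |x| < ε → (f₁ (x : ℂ)).im = 0)) :
    HalfPlaneContact (f₂ ∘ f₁) N := by
  rcases hc with ⟨⟨hf₁0im, m, M, δ, hm, hmM, hδ, hcontact⟩, ε, hε, hreal⟩ |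
    ⟨⟨hf₂0im, m, M, δ, hm, hmM, hδ, hcontact⟩, ε, hε, hreal⟩
  · -- Case 1 : f₁ has contact N, f₂ is real on an interval
    obtain ⟨a, r, hapos, hrpos, hkey⟩ := key_lemma W hW f₂ hf₂a
      (fun z hz => hf₂m z hz) hε hreal
    have hf₂0 : (f₂ 0).im = 0 := by simpa using hreal 0 (by simpa using hε)
    -- continuity of f₁ at 0
    obtain ⟨δ₃, hδ₃, hf₁r⟩ := Metric.eventually_nhds_iff.mp
      (Complex.continuous_ofReal.continuousAt.eventually
        ((hf₁a.continuousAt.eventually_mem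
          (Metric.closedBall_mem_nhds (f₁ 0) hrpos)).mono (fun z hz => hz)))
    set c₁ : ℝ := min ((a/2) ^ N) ((2*a) ^ N) with hc₁_def
    set c₂ : ℝ := max ((a/2) ^ N) ((2*a) ^ N) with hc₂_def
    have hc₁pos : 0 < c₁ :=
      lt_min (Real.rpow_pos_of_pos (by linarith) _) (Real.rpow_pos_of_pos (by linarith) _)
    have hc₁c₂ : c₁ ≤ c₂ := min_le_max
    have hc₂pos : 0 < c₂ := hc₁pos.trans_le hc₁c₂
    refine ⟨by simp [hf₁0, hf₂0], (a/4) * m / c₂, 2*a*M / c₁, min δ δ₃,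
      div_pos (by positivity) hc₂pos, ?_, lt_min hδ hδ₃, ?_⟩
    · calc (a/4) * m / c₂ ≤ (a/4) * M / c₁ :=
          div_le_div₀ (by nlinarith) (by nlinarith) hc₁pos hc₁c₂
      _ ≤ 2*a*M / c₁ := div_le_div₀ (by nlinarith) (by nlinarith) hc₁pos le_rfl
    · intro x hx0 hxδ
      have hxδ₁ : |x| < δ := hxδ.trans_le (min_le_left _ _)
      have hxδ₃ : |x| < δ₃ := hxδ.trans_le (min_le_right _ _)
      set w : ℂ := f₁ (x:ℂ) with hw_def
      obtain ⟨hcon1, hcon2⟩ := hcontact x hx0 hxδ₁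
      rw [hf₁0] at hcon1 hcon2
      have habs0 : ‖0 - w‖ = ‖w‖ := by
        rw [zero_sub, norm_neg]
      rw [habs0] at hcon1 hcon2
      have hw0 : w ≠ 0 := by
        intro h0
        have h0' : f₁ (x:ℂ) = 0 := h0
        rw [h0'] at hcon1
        simp at hcon1
        linarith
      have hwabs : 0 < ‖w‖ := by
        simpa [norm_pos_iff] using hw0
      have hwr : ‖w‖ ≤ r := by
        have := hf₁r (y := x) (by simpa [Real.dist_eq] using hxδ₃)
        rw [Metric.mem_closedBall, hf₁0, Complex.dist_eq, sub_zero] at this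
        exact this
      have hP : 0 < ‖w‖ ^ N := Real.rpow_pos_of_pos hwabs _
      have hwim : 0 < w.im := by
        have := (le_div_iff₀ hP).mp hcon1
        nlinarith
      obtain ⟨hE1, hE2, hE3, hE4⟩ := hkey w hwr hwim
      -- the target ratio
      have hfc0 : (f₂ ∘ f₁) (0:ℂ) = f₂ 0 := by simp [hf₁0]
      have himeq : ((f₂ ∘ f₁) (x:ℂ)).im = (f₂ w - f₂ 0).im := by
        simp [Function.comp, hw_def, Complex.sub_im, hf₂0]
      have hDeq : ‖(f₂ ∘ f₁) (0:ℂ) - (f₂ ∘ f₁) (x:ℂ)‖ =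
          ‖f₂ w - f₂ 0‖ := by
        rw [hfc0]
        simp only [Function.comp, ← hw_def]
        rw [← norm_neg]
        ring_nf
      set D : ℝ := ‖f₂ w - f₂ 0‖ with hD_def
      have hDpos : 0 < D := lt_of_lt_of_le (by positivity) hE3
      set q : ℝ := D / ‖w‖ with hq_def
      have hq1 : a/2 ≤ q := (le_div_iff₀ hwabs).mpr (by linarith [hE3])
      have hq2 : q ≤ 2*a := (div_le_iff₀ hwabs).mpr (by linarith [hE4])
      have hqD : D = ‖w‖ * q := by
        rw [hq_def, mul_div_cancel₀]
        exact hwabs.ne'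
      obtain ⟨hqN1, hqN2⟩ := rpow_bracket (by linarith : (0:ℝ) < a/2) hq1 hq2
      have hDN : D ^ N = ‖w‖ ^ N * q ^ N := by
        rw [hqD, Real.mul_rpow hwabs.le (by positivity)]
      have hqpos : 0 < q := by positivity
      have hqNpos : 0 < q ^ N := Real.rpow_pos_of_pos hqpos _
      rw [himeq, hDeq, hDN]
      have hwimub : w.im ≤ M * ‖w‖ ^ N := by
        have := (div_le_iff₀ hP).mp hcon2
        linarith
      have hwimlb : m * ‖w‖ ^ N ≤ w.im := by
        have := (le_div_iff₀ hP).mp hcon1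
        linarith
      have hPne : ‖w‖ ^ N ≠ 0 := hP.ne'
      have hc₂ne : c₂ ≠ 0 := hc₂pos.ne'
      have hc₁ne : c₁ ≠ 0 := hc₁pos.ne'
      have ha4 : (0:ℝ) ≤ a/4 := by linarith
      have h2a : (0:ℝ) ≤ 2*a := by linarith
      constructor
      · calc (a/4) * m / c₂ = ((a/4) * (m * ‖w‖ ^ N)) / (‖w‖ ^ N * c₂) := by
              field_simp
        _ ≤ (f₂ w - f₂ 0).im / (‖w‖ ^ N * q ^ N) := by
              apply div_le_div₀ ?_ ?_ (mul_pos hP hqNpos) ?_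
              · exact le_trans (mul_nonneg ha4 hwim.le) hE1
              · refine le_trans ?_ hE1
                have := mul_le_mul_of_nonneg_left hwimlb ha4
                linarith
              · exact mul_le_mul_of_nonneg_left hqN2 hP.le
      · calc (f₂ w - f₂ 0).im / (‖w‖ ^ N * q ^ N)
            ≤ (2*a * (M * ‖w‖ ^ N)) / (‖w‖ ^ N * c₁) := by
              apply div_le_div₀ ?_ ?_ (mul_pos hP hc₁pos) ?_
              · exact mul_nonneg h2a (mul_nonneg (by linarith) hP.le)
              · refine hE2.trans ?_
                have := mul_le_mul_of_nonneg_left hwimub h2a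
                linarith
              · exact mul_le_mul_of_nonneg_left hqN1 hP.le
        _ = 2*a*M / c₁ := by field_simp
  · -- Case 2 : f₂ has contact N, f₁ is real on an interval
    have htend : Tendsto (fun t : ℝ => (t:ℂ) * Complex.I) (𝓝[>] (0:ℝ)) (𝓝 (0:ℂ)) := by
      have : Tendsto (fun t : ℝ => (t:ℂ) * Complex.I) (𝓝 (0:ℝ)) (𝓝 (0:ℂ)) := by
        simpa using (Complex.continuous_ofReal.tendsto 0).mul_const Complex.I
      exact this.mono_left nhdsWithin_le_nhds
    have hnev : ¬ (∀ᶠ z in 𝓝 (0:ℂ), f₁ z = 0) := by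
      intro hev
      have h1 := htend.eventually_mem hW
      have h2 := htend.eventually hev
      obtain ⟨t, ht⟩ := ((h1.and h2).and self_mem_nhdsWithin).exists
      have hmem := hf₁m _ ⟨ht.1.1, by simp [UHP, ht.2]⟩
      rw [ht.1.2] at hmem
      simp [UHP] at hmem
    have hne : ∀ᶠ z in 𝓝[≠] (0:ℂ), f₁ z ≠ 0 :=
      (hf₁a.eventually_eq_zero_or_eventually_ne_zero).resolve_left hnev
    have htr : Tendsto (fun x : ℝ => (x:ℂ)) (𝓝[≠] (0:ℝ)) (𝓝[≠] (0:ℂ)) := by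
      rw [tendsto_nhdsWithin_iff]
      constructor
      · exact ((by simpa using (Complex.continuous_ofReal.tendsto 0)) :
          Tendsto (fun x : ℝ => (x:ℂ)) (𝓝 (0:ℝ)) (𝓝 (0:ℂ))).mono_left nhdsWithin_le_nhds
      · filter_upwards [self_mem_nhdsWithin] with x hx
        exact Complex.ofReal_ne_zero.mpr hx
    have hne' : ∀ᶠ x : ℝ in 𝓝[≠] (0:ℝ), f₁ (x:ℂ) ≠ 0 := htr.eventually hne
    have hc0 : Tendsto (fun x : ℝ => f₁ (x:ℂ)) (𝓝 (0:ℝ)) (𝓝 (0:ℂ)) := by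
      have h1 := hf₁a.continuousAt.tendsto
      rw [hf₁0] at h1
      exact h1.comp (by simpa using (Complex.continuous_ofReal.tendsto 0))
    have hcont := hc0.eventually_mem (Metric.ball_mem_nhds (0:ℂ) hδ)
    have hrealev : ∀ᶠ x : ℝ in 𝓝 (0:ℝ), (f₁ (x:ℂ)).im = 0 := by
      have hmem : {x : ℝ | |x| < ε} ∈ 𝓝 (0:ℝ) := by
        have : {x : ℝ | |x| < ε} = Metric.ball (0:ℝ) ε := by
          ext x; simp [Real.dist_eq]
        rw [this]; exact Metric.ball_mem_nhds _ hε
      filter_upwards [hmem] with x hx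
      exact hreal x hx
    have hall : ∀ᶠ x : ℝ in 𝓝[≠] (0:ℝ),
        f₁ (x:ℂ) ≠ 0 ∧ f₁ (x:ℂ) ∈ Metric.ball (0:ℂ) δ ∧ (f₁ (x:ℂ)).im = 0 :=
      hne'.and ((hcont.and hrealev).filter_mono nhdsWithin_le_nhds)
    rw [eventually_nhdsWithin_iff] at hall
    obtain ⟨δ', hδ', hprop⟩ := Metric.eventually_nhds_iff.mp hall
    refine ⟨by simpa [Function.comp, hf₁0] using hf₂0im, m, M, δ', hm, hmM, hδ', ?_⟩
    intro x hx0 hxδ'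
    have hx_ne : x ∈ ({0}ᶜ : Set ℝ) := by
      simpa using (abs_pos.mp hx0)
    obtain ⟨hne0, hball, him0⟩ := hprop (y := x) (by simpa [Real.dist_eq] using hxδ') hx_ne
    set y : ℝ := (f₁ (x:ℂ)).re with hy_def
    have hy : f₁ (x:ℂ) = (y:ℂ) := Complex.ext (by simp [hy_def]) (by simp [him0])
    have hy0 : 0 < |y| := by
      rw [abs_pos]
      intro h0
      exact hne0 (by rw [hy, h0]; simp)
    have hyδ : |y| < δ := by
      have : ‖f₁ (x:ℂ)‖ < δ := by
        simpa [Complex.dist_eq] using hball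
      rwa [hy, Complex.norm_real] at this
    have hres := hcontact y hy0 hyδ
    simp only [Function.comp_apply]
    rw [hf₁0, hy]
    exact hres
end
end

section
/- Let V be an open set containing the closed unit disk, and let φ : V → ℂ be analytic with φ(𝔻) ⊆ 𝔻. Suppose |φ(ζ₀)| < 1 for at least one ζ₀ ∈ ∂𝔻 (i.e., φ is not a finite Blaschke product). Then the set A = {ζ ∈ ∂𝔻 : |φ(ζ)| = 1} is finite, and for every ζ ∈ A there exists an even positive integer n such that φ has order of contact n with ∂𝔻 at ζ. -/
open Complex Filter Set Topology Asymptotics Metric Polynomial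

noncomputable section

/-! ### Auxiliary lemmas -/

lemma hasDerivAt_conj_conj {f : ℂ → ℂ} {d z : ℂ} (h : HasDerivAt f d ((starRingEnd ℂ) z)) :
    HasDerivAt (fun w => (starRingEnd ℂ) (f ((starRingEnd ℂ) w))) ((starRingEnd ℂ) d) z := by
  rw [hasDerivAt_iff_tendsto_slope] at h ⊢
  have hconj : Tendsto (fun w : ℂ => (starRingEnd ℂ) w) (𝓝[≠] z) (𝓝[≠] ((starRingEnd ℂ) z)) := by
    apply Filter.Tendsto.inf
    · exact (Complex.continuous_conj.tendsto z)
    · apply tendsto_principal_principal.2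
      intro w hw
      simpa using fun hc => hw (by simpa using congrArg (starRingEnd ℂ) hc)
  have := (Complex.continuous_conj.tendsto d).comp (h.comp hconj)
  refine this.congr (fun w => ?_)
  simp only [Function.comp_apply, slope_def_field]
  rw [map_div₀, map_sub, map_sub]; simp

lemma normSq_id (a u : ℂ) :
    Complex.normSq (1 - (starRingEnd ℂ) a * u) - Complex.normSq (a - u)
      = (1 - Complex.normSq a) * (1 - Complex.normSq u) := by
  simp only [Complex.normSq_apply, Complex.sub_re, Complex.sub_im, Complex.mul_re, Complex.mul_im,
    Complex.conj_re, Complex.conj_im, Complex.one_re, Complex.one_im]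
  ring

lemma pick_lower {φ : ℂ → ℂ} (hφd : DifferentiableOn ℂ φ (ball (0:ℂ) 1))
    (hm : ∀ z ∈ ball (0:ℂ) 1, φ z ∈ ball (0:ℂ) 1) {w : ℂ} (hw : ‖w‖ < 1) :
    (1 - ‖φ 0‖) * (1 - ‖w‖) / 2 ≤ 1 - ‖φ w‖ ^ 2 := by
  set a := φ 0 with ha_def
  have h0 : (0:ℂ) ∈ ball (0:ℂ) 1 := by simp
  have ha : ‖a‖ < 1 := by
    simpa using mem_ball_zero_iff.1 (hm 0 h0)
  set g : ℂ → ℂ := fun z => (a - φ z) / (1 - (starRingEnd ℂ) a * φ z) with hg_def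
  have hden : ∀ u : ℂ, ‖u‖ < 1 → 1 - (starRingEnd ℂ) a * u ≠ 0 := by
    intro u hu h
    rw [sub_eq_zero] at h
    have h2 : ‖(starRingEnd ℂ) a * u‖ = 1 := by rw [← h]; simp
    rw [norm_mul, Complex.norm_conj] at h2
    nlinarith [norm_nonneg a, norm_nonneg u]
  have hgd : DifferentiableOn ℂ g (ball (0:ℂ) 1) := by
    apply DifferentiableOn.div
    · exact (differentiableOn_const a).sub hφd
    · exact (differentiableOn_const 1).sub ((differentiableOn_const _).mul hφd)
    · intro z hz
      exact hden (φ z) (by simpa using mem_ball_zero_iff.1 (hm z hz))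
  have key : ∀ u : ℂ, ‖u‖ < 1 →
      (1 - Complex.normSq ((a - u) / (1 - (starRingEnd ℂ) a * u)))
        * Complex.normSq (1 - (starRingEnd ℂ) a * u)
      = (1 - Complex.normSq a) * (1 - Complex.normSq u) := by
    intro u hu
    have hd := hden u hu
    have hdn : Complex.normSq (1 - (starRingEnd ℂ) a * u) ≠ 0 := by
      simpa [Complex.normSq_eq_zero] using hd
    rw [normSq_div, ← normSq_id a u]
    rw [sub_mul, one_mul, div_mul_cancel₀ _ hdn]
  have hgm : ∀ z ∈ ball (0:ℂ) 1, g z ∈ ball (0:ℂ) 1 := by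
    intro z hz
    have hu : ‖φ z‖ < 1 := by
      simpa using mem_ball_zero_iff.1 (hm z hz)
    have hk := key (φ z) hu
    have hdn : 0 < Complex.normSq (1 - (starRingEnd ℂ) a * φ z) :=
      Complex.normSq_pos.2 (hden (φ z) hu)
    have hna : Complex.normSq a < 1 := by
      rw [← Complex.sq_norm]; nlinarith [norm_nonneg a]
    have hnu : Complex.normSq (φ z) < 1 := by
      rw [← Complex.sq_norm]; nlinarith [norm_nonneg (φ z)]
    have hg1 : Complex.normSq (g z) < 1 := by nlinarith
    rw [mem_ball_zero_iff]
    nlinarith [Complex.sq_norm (g z), norm_nonneg (g z)]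
  have hschwarz : ‖g w‖ ≤ ‖w‖ := by
    apply Complex.norm_le_norm_of_mapsTo_ball hgd (fun z hz => ball_subset_closedBall (hgm z hz)) _ hw
    simp [hg_def, ha_def]
  -- final computation
  have hu : ‖φ w‖ < 1 := by
    simpa using mem_ball_zero_iff.1 (hm w (mem_ball_zero_iff.2 (by simpa using hw)))
  have hk := key (φ w) hu
  have hd := hden (φ w) hu
  have hdn : 0 < Complex.normSq (1 - (starRingEnd ℂ) a * φ w) := Complex.normSq_pos.2 hd
  have hDlow : (1 - ‖a‖) ^ 2 ≤ Complex.normSq (1 - (starRingEnd ℂ) a * φ w) := by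
    rw [← Complex.sq_norm]
    have h1 : 1 - ‖a‖ ≤ ‖1 - (starRingEnd ℂ) a * φ w‖ := by
      have h2 : ‖(1:ℂ)‖ - ‖(starRingEnd ℂ) a * φ w‖ ≤ ‖1 - (starRingEnd ℂ) a * φ w‖ :=
        norm_sub_norm_le 1 _
      have h3 : ‖(starRingEnd ℂ) a * φ w‖ ≤ ‖a‖ := by
        rw [norm_mul, Complex.norm_conj]
        nlinarith [norm_nonneg a, norm_nonneg (φ w)]
      simp only [norm_one] at h2
      linarith
    nlinarith [norm_nonneg (1 - (starRingEnd ℂ) a * φ w)]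
  set ab := ‖a‖
  set s := ‖w‖
  set t := ‖g w‖
  have ht0 : 0 ≤ t := norm_nonneg _
  have hs0 : 0 ≤ s := norm_nonneg _
  have hab0 : 0 ≤ ab := norm_nonneg _
  have hgsq : Complex.normSq (g w) = t ^ 2 := (Complex.sq_norm _).symm
  have hasq : Complex.normSq a = ab ^ 2 := (Complex.sq_norm _).symm
  have husq : Complex.normSq (φ w) = ‖φ w‖ ^ 2 := (Complex.sq_norm _).symm
  rw [hgsq, hasq, husq] at hk
  set u2 := ‖φ w‖ ^ 2
  -- hk : (1 - t^2) * D = (1 - ab^2) * (1 - u2), D ≥ (1-ab)^2, t ≤ s < 1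
  set D := Complex.normSq (1 - (starRingEnd ℂ) a * φ w)
  have step1 : (1 - s^2) * (1 - ab)^2 ≤ (1 - t^2) * D := by
    have e1 : 0 ≤ 1 - s^2 := by nlinarith
    have e2 : 1 - s^2 ≤ 1 - t^2 := by nlinarith
    nlinarith
  have step2 : (1 - s^2) * (1 - ab)^2 ≤ (1 - ab^2) * (1 - u2) := by linarith [hk ▸ step1]
  clear_value ab s t u2 D
  clear key hgm hgd hden hm hφd hd hu hgsq hasq husq ha_def hg_def h0
  have hab2 : 0 < 1 - ab^2 := by nlinarith
  have hlt : 0 < (1 - t^2) * D := mul_pos (by nlinarith) hdn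
  have h1u : 0 < 1 - u2 := by
    rw [hk] at hlt
    by_contra hcon
    push_neg at hcon
    nlinarith [hlt]
  have cancel0 : 0 ≤ (1-ab) * ((1+ab)*(1-u2) - (1-s)*(1+s)*(1-ab)) := by nlinarith [step2]
  have cancel : (1-s)*(1+s)*(1-ab) ≤ (1+ab)*(1-u2) := by
    by_contra hcon
    push_neg at hcon
    nlinarith [cancel0]
  nlinarith [cancel, h1u, mul_nonneg (by linarith : (0:ℝ) ≤ 1-s) (by linarith : (0:ℝ) ≤ 1-ab)]

lemma annulus_preconnected {r R : ℝ} (hr : 0 < r) :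
    IsPreconnected {z : ℂ | r < ‖z‖ ∧ ‖z‖ < R} := by
  have hS : IsPreconnected ((Set.Ioo r R) ×ˢ (Metric.sphere (0:ℂ) 1)) := by
    apply IsPreconnected.prod isPreconnected_Ioo
    refine (isConnected_sphere ?_ 0 zero_le_one).isPreconnected
    rw [rank_real_complex]
    norm_num
  have himg : (fun p : ℝ × ℂ => p.1 • p.2) '' ((Set.Ioo r R) ×ˢ (Metric.sphere (0:ℂ) 1))
      = {z : ℂ | r < ‖z‖ ∧ ‖z‖ < R} := by
    ext z
    constructor
    · rintro ⟨⟨t, u⟩, ⟨⟨ht1, ht2⟩, hu⟩, rfl⟩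
      have hu1 : ‖u‖ = 1 := by
        simpa using mem_sphere_zero_iff_norm.1 hu
      have habs : ‖t • u‖ = t := by
        rw [Complex.real_smul, norm_mul, Complex.norm_real, Real.norm_eq_abs, hu1, mul_one,
          abs_of_pos (lt_trans hr ht1)]
      rw [Set.mem_setOf_eq, habs]
      exact ⟨ht1, ht2⟩
    · rintro ⟨h1, h2⟩
      have hz0 : z ≠ 0 := by
        intro h; rw [h] at h1; simp at h1; linarith
      have habs : ‖z‖ ≠ 0 := by simpa using hz0
      refine ⟨⟨‖z‖, (‖z‖)⁻¹ • z⟩, ⟨⟨h1, h2⟩, ?_⟩, ?_⟩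
      · rw [mem_sphere_zero_iff_norm]
        rw [Complex.real_smul, norm_mul,
          Complex.norm_real, Real.norm_eq_abs, abs_inv, _root_.abs_of_nonneg (norm_nonneg z)]
        field_simp
      · simp only [smul_smul]
        rw [mul_inv_cancel₀ habs, one_smul]
  rw [← himg]
  exact hS.image _ (continuous_fst.smul continuous_snd).continuousOn

/-- an analytic self-map of `𝔻` extending analytically past `∂𝔻` which is not a
finite Blaschke product has finitely many points of contact with the circle, each of some even
positive order. -/
theorem finite_contact_set_of_analytic_extension
    (V : Set ℂ) (hVo : IsOpen V) (hV : Metric.closedBall (0 : ℂ) 1 ⊆ V)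
    (φ : ℂ → ℂ) (hφ : DifferentiableOn ℂ φ V)
    (hmap : ∀ z ∈ Metric.ball (0 : ℂ) 1, φ z ∈ Metric.ball (0 : ℂ) 1)
    (ζ₀ : ℂ) (hζ₀ : ‖ζ₀‖ = 1) (hφζ₀ : ‖φ ζ₀‖ < 1) :
    Set.Finite {ζ : ℂ | ‖ζ‖ = 1 ∧ ‖φ ζ‖ = 1} ∧
    ∀ ζ : ℂ, ‖ζ‖ = 1 → ‖φ ζ‖ = 1 →
      ∃ n : ℕ, 0 < n ∧ Even n ∧ DiskContact φ ζ (n : ℝ) := by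
  -- enlarge the disk
  obtain ⟨δR, hδR0, hRV⟩ : ∃ δ > 0, Metric.closedBall (0:ℂ) (1+δ) ⊆ V := by
    obtain ⟨δ, hδ, h⟩ := (isCompact_closedBall (0:ℂ) 1).exists_cthickening_subset_open hVo hV
    refine ⟨δ, hδ, ?_⟩
    rwa [cthickening_closedBall hδ.le zero_le_one, add_comm] at h
  set R : ℝ := 1 + δR with hR_def
  have hR1 : 1 < R := by simp [hR_def]; linarith
  have hRinv : R⁻¹ < 1 := by
    rw [inv_lt_one_iff₀]; right; exact hR1
  have hRinv0 : 0 < R⁻¹ := by positivity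
  -- |φ| ≤ 1 on the closed disk
  have hmapc : ∀ z : ℂ, ‖z‖ ≤ 1 → ‖φ z‖ ≤ 1 := by
    intro z hz
    have hc : ContinuousOn φ (closure (ball (0:ℂ) 1)) := by
      rw [closure_ball (0:ℂ) one_ne_zero]
      exact hφ.continuousOn.mono hV
    have h1 : φ '' closure (ball (0:ℂ) 1) ⊆ closure (φ '' ball (0:ℂ) 1) :=
      hc.image_closure
    have h2 : closure (φ '' ball (0:ℂ) 1) ⊆ Metric.closedBall 0 1 := by
      apply closure_minimal _ isClosed_closedBall
      rintro _ ⟨w, hw, rfl⟩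
      exact ball_subset_closedBall (hmap w hw)
    have hz' : z ∈ closure (ball (0:ℂ) 1) := by
      rw [closure_ball (0:ℂ) one_ne_zero, mem_closedBall_zero_iff]
      exact hz
    have := h2 (h1 ⟨z, hz', rfl⟩)
    rwa [mem_closedBall_zero_iff] at this
  -- the reflected function and F
  set F : ℂ → ℂ := fun z =>
    1 - φ z * (starRingEnd ℂ) (φ ((starRingEnd ℂ) z⁻¹)) with hF_def
  set W : Set ℂ := {z : ℂ | R⁻¹ < ‖z‖ ∧ ‖z‖ < R} with hW_def
  have hWo : IsOpen W := by
    have : W = (fun z : ℂ => ‖z‖) ⁻¹' (Set.Ioo R⁻¹ R) := rfl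
    rw [this]
    exact isOpen_Ioo.preimage continuous_norm
  have hWpc : IsPreconnected W := annulus_preconnected hRinv0
  have hsphW : ∀ z : ℂ, ‖z‖ = 1 → z ∈ W := by
    intro z hz
    show R⁻¹ < ‖z‖ ∧ ‖z‖ < R
    rw [hz]
    exact ⟨hRinv, hR1⟩
  -- F is analytic on W
  have hFd : DifferentiableOn ℂ F W := by
    intro z hz
    obtain ⟨hz1, hz2⟩ := hz
    have hz0 : z ≠ 0 := by
      intro h; rw [h] at hz1; simp at hz1; linarith
    have hzV : z ∈ V := by
      apply hRV
      rw [mem_closedBall_zero_iff]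
      linarith
    have hzV2 : (starRingEnd ℂ) z⁻¹ ∈ V := by
      apply hRV
      rw [mem_closedBall_zero_iff, map_inv₀, norm_inv, Complex.norm_conj]
      rw [inv_le_comm₀ (by linarith) (by linarith)]
      linarith
    have hd1 : DifferentiableAt ℂ φ z := hφ.differentiableAt (hVo.mem_nhds hzV)
    have hd2 : DifferentiableAt ℂ (fun w => (starRingEnd ℂ) (φ ((starRingEnd ℂ) w))) z⁻¹ := by
      have hφd : HasDerivAt φ (deriv φ ((starRingEnd ℂ) z⁻¹)) ((starRingEnd ℂ) z⁻¹) :=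
        (hφ.differentiableAt (hVo.mem_nhds hzV2)).hasDerivAt
      exact (hasDerivAt_conj_conj hφd).differentiableAt
    have hd3 : DifferentiableAt ℂ (fun w : ℂ => (starRingEnd ℂ) (φ ((starRingEnd ℂ) w⁻¹))) z := by
      have hinv : DifferentiableAt ℂ (fun w : ℂ => w⁻¹) z := differentiableAt_inv hz0
      have h := DifferentiableAt.comp z hd2 hinv
      exact h
    exact ((differentiableAt_const 1).sub (hd1.mul hd3)).differentiableWithinAt
  have hFan : AnalyticOnNhd ℂ F W := hFd.analyticOnNhd hWo
  -- value of F on the circle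
  have hFcirc : ∀ η : ℂ, ‖η‖ = 1 →
      F η = ((1 - ‖φ η‖ ^ 2 : ℝ) : ℂ) := by
    intro η hη
    have h1 : (starRingEnd ℂ) η⁻¹ = η := by
      rw [map_inv₀]
      apply inv_eq_of_mul_eq_one_right
      rw [mul_comm, Complex.mul_conj, Complex.normSq_eq_norm_sq, hη]
      norm_num
    rw [hF_def]
    simp only [h1]
    rw [Complex.mul_conj, Complex.normSq_eq_norm_sq]
    push_cast
    ring
  have hFζ₀ : F ζ₀ ≠ 0 := by
    rw [hFcirc ζ₀ hζ₀]
    have : (0:ℝ) < 1 - ‖φ ζ₀‖ ^ 2 := by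
      nlinarith [norm_nonneg (φ ζ₀)]
    exact Complex.ofReal_ne_zero.2 this.ne'
  -- F is not locally zero anywhere on the circle
  have hnotev : ∀ z : ℂ, ‖z‖ = 1 → ¬ (∀ᶠ w in 𝓝 z, F w = 0) := by
    intro z hz hev
    have hev' : F =ᶠ[𝓝 z] 0 := by filter_upwards [hev] with w hw; simpa using hw
    have := hFan.eqOn_zero_of_preconnected_of_eventuallyEq_zero hWpc (hsphW z hz) hev'
    exact hFζ₀ (this (hsphW ζ₀ hζ₀))
  constructor
  · -- FINITENESS
    have hU : ∀ z : ℂ, ‖z‖ = 1 → ∀ᶠ w in 𝓝 z, w ≠ z → F w ≠ 0 := by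
      intro z hz
      have h := ((hFan z (hsphW z hz)).eventually_eq_zero_or_eventually_ne_zero).resolve_left
        (hnotev z hz)
      rwa [eventually_nhdsWithin_iff] at h
    have hcomp : IsCompact (Metric.sphere (0:ℂ) 1) := isCompact_sphere 0 1
    obtain ⟨t, -, hcov⟩ := hcomp.elim_nhds_subcover
      (fun z => {w : ℂ | w ≠ z → F w ≠ 0})
      (fun z hz => hU z (by simpa [Complex.dist_eq] using hz))
    apply Set.Finite.subset t.finite_toSet
    rintro ζ ⟨h1, h2⟩
    have hζs : ζ ∈ Metric.sphere (0:ℂ) 1 := by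
      simp [Complex.dist_eq, h1]
    obtain ⟨z, hzt, hζz⟩ := Set.mem_iUnion₂.1 (hcov hζs)
    have hFz : F ζ = 0 := by
      rw [hFcirc ζ h1, h2]
      norm_num
    by_cases hζzeq : ζ = z
    · rw [hζzeq]
      exact hzt
    · exact absurd hFz (hζz hζzeq)
  · -- CONTACT
    intro ζ hζ hφζ
    have hζW := hsphW ζ hζ
    have hζV : ζ ∈ V := hV (by rw [mem_closedBall_zero_iff, hζ])
    have hFζ : F ζ = 0 := by rw [hFcirc ζ hζ, hφζ]; norm_num
    obtain ⟨n, G, hGan, hGζ, hFG⟩ :=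
      ((hFan ζ hζW).exists_eventuallyEq_pow_smul_nonzero_iff).2 (hnotev ζ hζ)
    have hn0 : n ≠ 0 := by
      intro h
      rw [h] at hFG
      have h2 := hFG.self_of_nhds
      simp only [pow_zero, one_smul, hFζ] at h2
      exact hGζ h2.symm
    have hφ0 : ‖φ 0‖ < 1 := by
      have := hmap 0 (by simp)
      simpa using mem_ball_zero_iff.1 this
    have hφb : DifferentiableOn ℂ φ (ball (0:ℂ) 1) :=
      hφ.mono (fun w hw => hV (ball_subset_closedBall hw))
    have hder : HasDerivAt φ (deriv φ ζ) ζ :=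
      (hφ.differentiableAt (hVo.mem_nhds hζV)).hasDerivAt
    set d : ℂ := deriv φ ζ with hd_def
    have hζ0 : ζ ≠ 0 := by
      intro h; rw [h] at hζ; simp at hζ
    -- derivative is nonzero
    have hd0 : d ≠ 0 := by
      intro hdz
      set c : ℝ := (1 - ‖φ 0‖) / 2 with hc_def
      have hc : 0 < c := by rw [hc_def]; linarith
      have hlo : (fun w => φ w - φ ζ) =o[𝓝 ζ] (fun w => w - ζ) := by
        have h1 := hasDerivAt_iff_isLittleO.1 hder
        rw [hdz] at h1
        simpa using h1
      have hev1 : ∀ᶠ w in 𝓝 ζ, ‖φ w - φ ζ‖ ≤ c / 4 * ‖w - ζ‖ :=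
        hlo.def (by positivity)
      have htend : Tendsto (fun t : ℝ => (t:ℂ) * ζ) (𝓝[<] (1:ℝ)) (𝓝 ζ) := by
        have h1 : Tendsto (fun t : ℝ => (t:ℂ) * ζ) (𝓝 (1:ℝ)) (𝓝 ζ) := by
          have h0 : Continuous (fun t : ℝ => (t:ℂ) * ζ) :=
            Complex.continuous_ofReal.mul continuous_const
          have := h0.tendsto (1:ℝ)
          simpa using this
        exact h1.mono_left nhdsWithin_le_nhds
      have hev2 : ∀ᶠ t : ℝ in 𝓝[<] 1, ‖φ ((t:ℂ) * ζ) - φ ζ‖ ≤ c / 4 * ‖(t:ℂ) * ζ - ζ‖ :=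
        htend.eventually hev1
      have hev3 : ∀ᶠ t : ℝ in 𝓝[<] 1, t ∈ Set.Ioo (0:ℝ) 1 :=
        Ioo_mem_nhdsLT_of_mem (by norm_num)
      obtain ⟨t, hb, ht0, ht1⟩ := (hev2.and hev3).exists
      set w : ℂ := (t:ℂ) * ζ with hw_def
      have habsw : ‖w‖ = t := by
        rw [hw_def, norm_mul, Complex.norm_real, Real.norm_eq_abs, hζ, mul_one, _root_.abs_of_pos ht0]
      have habswζ : ‖w - ζ‖ = 1 - t := by
        have : w - ζ = ((t:ℂ) - 1) * ζ := by rw [hw_def]; ring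
        rw [this, norm_mul, hζ, mul_one]
        have : ((t:ℂ) - 1) = ((t - 1 : ℝ) : ℂ) := by push_cast; ring
        rw [this, Complex.norm_real, Real.norm_eq_abs, abs_of_neg (by linarith)]
        ring
      have hlow := pick_lower hφb hmap (by rw [habsw]; exact ht1)
      rw [habsw] at hlow
      have hup : 1 - ‖φ w‖ ^ 2 ≤ 2 * (c / 4 * (1 - t)) := by
        have h1 : ‖φ w‖ ≤ 1 := hmapc w (by rw [habsw]; linarith)
        have h2 : ‖φ ζ‖ - ‖φ w‖ ≤ ‖φ ζ - φ w‖ := by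
          have := norm_sub_norm_le (φ ζ) (φ w)
          simpa using this
        have h3 : ‖φ ζ - φ w‖ = ‖φ w - φ ζ‖ := by
          rw [norm_sub_rev]
        have h4 : ‖φ w - φ ζ‖ ≤ c / 4 * (1 - t) := by
          have := hb
          rwa [habswζ] at this
        have h5 : ‖φ w‖ ≥ 0 := norm_nonneg _
        nlinarith [hφζ]
      rw [hc_def] at hup hc
      nlinarith [hup, hlow, hc]
    -- parity
    have heven : Even n := by
      set cθ : ℝ → ℂ := fun θ => ζ * Complex.exp ((θ:ℂ) * Complex.I) with hcθ_def
      have hcθ0 : cθ 0 = ζ := by simp [hcθ_def]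
      have hccont : Continuous cθ :=
        continuous_const.mul ((Complex.continuous_ofReal.mul continuous_const).cexp)
      have hctend : Tendsto cθ (𝓝 0) (𝓝 ζ) := by
        have := hccont.tendsto 0
        rwa [hcθ0] at this
      have hcirc : ∀ θ : ℝ, ‖cθ θ‖ = 1 := by
        intro θ
        rw [hcθ_def]
        simp only [norm_mul, hζ, one_mul]
        exact Complex.norm_exp_ofReal_mul_I θ
      have hD : HasDerivAt cθ (ζ * Complex.I) 0 := by
        have h2 : HasDerivAt (fun w : ℂ => w * Complex.I) ((1:ℂ) * Complex.I) 0 :=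
          (hasDerivAt_id (0:ℂ)).mul_const Complex.I
        have h3 := h2.cexp
        have h4 := h3.const_mul ζ
        have h5 : HasDerivAt (fun w : ℂ => ζ * Complex.exp (w * Complex.I))
            (ζ * Complex.I) ((0:ℝ):ℂ) := by
          have : ζ * (Complex.exp ((0:ℂ) * Complex.I) * ((1:ℂ) * Complex.I)) = ζ * Complex.I := by
            simp
          rw [← this]
          simpa using h4
        exact h5.comp_ofReal
      have hslope : Tendsto (fun θ : ℝ => (cθ θ - ζ) / (θ:ℂ)) (𝓝[≠] 0) (𝓝 (ζ * Complex.I)) := by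
        have h1 := hasDerivAt_iff_tendsto_slope.1 hD
        apply h1.congr
        intro θ
        simp [slope, hcθ0, Complex.real_smul, Complex.ofReal_inv, div_eq_inv_mul]
      set L : ℂ := (ζ * Complex.I) ^ n * G ζ with hL_def
      have hL0 : L ≠ 0 := mul_ne_zero (pow_ne_zero _ (mul_ne_zero hζ0 Complex.I_ne_zero)) hGζ
      have hT : Tendsto (fun θ : ℝ => F (cθ θ) / (θ:ℂ)^n) (𝓝[≠] 0) (𝓝 L) := by
        have h1 : Tendsto (fun θ : ℝ => ((cθ θ - ζ)/(θ:ℂ))^n * G (cθ θ)) (𝓝[≠] 0) (𝓝 L) := by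
          apply Tendsto.mul (hslope.pow n)
          exact (hGan.continuousAt.tendsto).comp (hctend.mono_left nhdsWithin_le_nhds)
        apply h1.congr'
        have hevF : ∀ᶠ θ : ℝ in 𝓝 0, F (cθ θ) = (cθ θ - ζ)^n • G (cθ θ) := hctend.eventually hFG
        filter_upwards [hevF.filter_mono nhdsWithin_le_nhds, self_mem_nhdsWithin] with θ hθ hθ0
        rw [hθ, smul_eq_mul, div_pow]
        have hθc : ((θ:ℂ))^n ≠ 0 := pow_ne_zero _ (by exact_mod_cast hθ0)
        field_simp
      have hsub1 : 𝓝[>] (0:ℝ) ≤ 𝓝[≠] (0:ℝ) := nhdsWithin_mono 0 (fun θ hθ => ne_of_gt hθ)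
      have hsub2 : 𝓝[<] (0:ℝ) ≤ 𝓝[≠] (0:ℝ) := nhdsWithin_mono 0 (fun θ hθ => ne_of_lt hθ)
      have hnum : ∀ θ : ℝ, 0 ≤ 1 - ‖φ (cθ θ)‖^2 := by
        intro θ
        have := hmapc (cθ θ) (le_of_eq (hcirc θ))
        nlinarith [norm_nonneg (φ (cθ θ))]
      have him0 : L.im = 0 := by
        have h1 : Tendsto (fun θ : ℝ => (F (cθ θ) / (θ:ℂ)^n).im) (𝓝[>] 0) (𝓝 L.im) :=
          (Complex.continuous_im.tendsto L).comp (hT.mono_left hsub1)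
        have h2 : Tendsto (fun θ : ℝ => (F (cθ θ) / (θ:ℂ)^n).im) (𝓝[>] 0) (𝓝 0) := by
          have h3 : ∀ᶠ θ : ℝ in 𝓝[>] 0, (0:ℝ) = (F (cθ θ) / (θ:ℂ)^n).im := by
            filter_upwards [self_mem_nhdsWithin] with θ hθ
            rw [hFcirc _ (hcirc θ), ← Complex.ofReal_pow, ← Complex.ofReal_div, Complex.ofReal_im]
          exact Tendsto.congr' h3 tendsto_const_nhds
        exact tendsto_nhds_unique h1 h2
      have hre0 : 0 ≤ L.re := by
        have h1 : Tendsto (fun θ : ℝ => (F (cθ θ) / (θ:ℂ)^n).re) (𝓝[>] 0) (𝓝 L.re) :=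
          (Complex.continuous_re.tendsto L).comp (hT.mono_left hsub1)
        apply ge_of_tendsto h1
        filter_upwards [self_mem_nhdsWithin] with θ hθ
        rw [hFcirc _ (hcirc θ), ← Complex.ofReal_pow, ← Complex.ofReal_div, Complex.ofReal_re]
        have hθp : (0:ℝ) < θ := hθ
        have := hnum θ
        positivity
      rcases Nat.even_or_odd n with h | hodd
      · exact h
      exfalso
      have hneg : Tendsto (fun θ : ℝ => ((-1:ℂ)^n * (F (cθ θ) / (θ:ℂ)^n)).re)
          (𝓝[<] 0) (𝓝 ((-1:ℂ)^n * L).re) :=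
        (Complex.continuous_re.tendsto _).comp ((tendsto_const_nhds.mul hT).mono_left hsub2)
      have hge : 0 ≤ ((-1:ℂ)^n * L).re := by
        apply ge_of_tendsto hneg
        filter_upwards [self_mem_nhdsWithin] with θ hθ
        have hθ0 : θ ≠ 0 := ne_of_lt hθ
        have hkey : (-1:ℂ)^n * (F (cθ θ) / (θ:ℂ)^n)
            = (((1 - ‖φ (cθ θ)‖^2) / (-θ)^n : ℝ) : ℂ) := by
          have hm1 : ((-1:ℂ))^n * ((-1:ℂ))^n = 1 := by
            rw [← pow_add, ← two_mul, pow_mul]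
            norm_num
          rw [hFcirc _ (hcirc θ)]
          push_cast
          rw [show (-(θ:ℂ))^n = (-1:ℂ)^n * (θ:ℂ)^n from neg_pow _ n,
            div_mul_eq_div_div_swap, div_eq_mul_inv _ ((-1:ℂ)^n),
            inv_eq_of_mul_eq_one_left hm1, mul_comm]
        rw [hkey, Complex.ofReal_re]
        have hθn : θ < 0 := hθ
        have hθp : (0:ℝ) < -θ := by linarith
        have := hnum θ
        positivity
      rw [hodd.neg_one_pow, neg_one_mul, Complex.neg_re] at hge
      have hLre : L.re = 0 := le_antisymm (by linarith) hre0
      exact hL0 (Complex.ext (by simpa using hLre) (by simpa using him0))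
    -- contact bounds
    refine ⟨n, Nat.pos_of_ne_zero hn0, heven, hφζ, ?_⟩
    set g : ℝ := ‖G ζ‖ with hg_def
    have hg0 : 0 < g := norm_pos_iff.2 hGζ
    set ad : ℝ := ‖d‖ with had_def
    have had0 : 0 < ad := norm_pos_iff.2 hd0
    have hev2 : ∀ᶠ w in 𝓝 ζ, g/2 ≤ ‖G w‖ ∧ ‖G w‖ ≤ 3*g/2 := by
      have hcont : ContinuousAt (fun w => ‖G w‖) ζ :=
        continuous_norm.continuousAt.comp hGan.continuousAt
      have hmem : ‖G ζ‖ ∈ Set.Ioo (g/2) (3*g/2) := by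
        constructor <;> [linarith; linarith]
      have hpre := hcont.preimage_mem_nhds (isOpen_Ioo.mem_nhds hmem)
      filter_upwards [hpre] with w hw
      exact ⟨le_of_lt hw.1, le_of_lt hw.2⟩
    have hev3 : ∀ᶠ w in 𝓝 ζ,
        ‖φ w - φ ζ - (w - ζ)*d‖ ≤ ad/2 * ‖w - ζ‖ := by
      have hlo := hasDerivAt_iff_isLittleO.1 hder
      have := hlo.def (by positivity : (0:ℝ) < ad/2)
      filter_upwards [this] with w hw
      simpa [smul_eq_mul] using hw
    obtain ⟨δ, hδ0, hδ⟩ := Metric.eventually_nhds_iff.1 ((hFG.and hev2).and hev3)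
    refine ⟨(g/2) / ((3*ad/2)^n), (3*g/2)/((ad/2)^n), δ, by positivity, ?_, hδ0, ?_⟩
    · apply div_le_div₀ (by positivity) (by linarith) (by positivity)
        (pow_le_pow_left₀ (by positivity) (by linarith) n)
    intro η hη hηζ hηδ
    obtain ⟨⟨hFeq, hGlo, hGhi⟩, hlin⟩ := hδ (show dist η ζ < δ by rwa [Complex.dist_eq])
    set A : ℝ := ‖η - ζ‖ with hA_def
    have hA0 : 0 < A := norm_pos_iff.2 (sub_ne_zero.2 hηζ)
    have hnum : 1 - ‖φ η‖^2 = A^n * ‖G η‖ := by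
      have h1 : ((1 - ‖φ η‖^2 : ℝ) : ℂ) = (η - ζ)^n * G η := by
        rw [← hFcirc η hη, hFeq, smul_eq_mul]
      have h2 : |1 - ‖φ η‖^2| = ‖(η - ζ)^n * G η‖ := by
        rw [← Real.norm_eq_abs, ← Complex.norm_real, h1]
      rw [norm_mul, norm_pow] at h2
      have h3 : 0 ≤ 1 - ‖φ η‖^2 :=
        sub_nonneg.2 (pow_le_one₀ (norm_nonneg (φ η)) (hmapc η (le_of_eq hη)))
      rwa [_root_.abs_of_nonneg h3] at h2
    have habsd : ‖(η - ζ)*d‖ = ad * A := by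
      rw [norm_mul, ← hA_def, ← had_def, mul_comm]
    have hswap : ‖φ ζ - φ η‖ = ‖φ η - φ ζ‖ :=
      norm_sub_rev (φ ζ) (φ η)
    have hBub : ‖φ ζ - φ η‖ ≤ 3*ad/2 * A := by
      have h3 : ‖φ η - φ ζ‖
          ≤ ‖φ η - φ ζ - (η - ζ)*d‖ + ‖(η - ζ)*d‖ := by
        have := norm_add_le (φ η - φ ζ - (η - ζ)*d) ((η - ζ)*d)
        simpa using this
      rw [hswap]
      rw [habsd] at h3
      linarith [hlin]
    have hBlb : ad/2 * A ≤ ‖φ ζ - φ η‖ := by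
      have h3 : ‖(η - ζ)*d‖ - ‖φ η - φ ζ - (η - ζ)*d‖
          ≤ ‖φ η - φ ζ‖ := by
        have h4 := norm_add_le (φ η - φ ζ) ((η - ζ)*d - (φ η - φ ζ))
        have h5 : ‖(η - ζ)*d - (φ η - φ ζ)‖
            = ‖φ η - φ ζ - (η - ζ)*d‖ := norm_sub_rev _ _
        have h6 : φ η - φ ζ + ((η - ζ)*d - (φ η - φ ζ)) = (η - ζ)*d := by ring
        rw [h6, h5] at h4
        linarith
      rw [hswap]
      rw [habsd] at h3
      linarith [hlin]
    have hBpos : 0 < ‖φ ζ - φ η‖ :=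
      lt_of_lt_of_le (by positivity) hBlb
    have hX1 : ((3*ad/2):ℝ)^n ≠ 0 := by positivity
    have hX2 : ((ad/2):ℝ)^n ≠ 0 := by positivity
    constructor
    · rw [Real.rpow_natCast, hnum, le_div_iff₀ (pow_pos hBpos n)]
      calc (g/2) / ((3*ad/2)^n) * ‖φ ζ - φ η‖^n
          ≤ (g/2) / ((3*ad/2)^n) * (3*ad/2 * A)^n := by
            apply mul_le_mul_of_nonneg_left (pow_le_pow_left₀ hBpos.le hBub n) (by positivity)
        _ = g/2 * A^n := by
            rw [mul_pow, ← mul_assoc, div_mul_cancel₀ _ hX1]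
        _ ≤ A^n * ‖G η‖ := by
            rw [mul_comm]
            exact mul_le_mul_of_nonneg_left hGlo (by positivity)
    · rw [Real.rpow_natCast, hnum, div_le_iff₀ (pow_pos hBpos n)]
      calc A^n * ‖G η‖
          ≤ A^n * (3*g/2) := mul_le_mul_of_nonneg_left hGhi (by positivity)
        _ = (3*g/2)/((ad/2)^n) * (ad/2 * A)^n := by
            rw [mul_pow, ← mul_assoc, div_mul_cancel₀ _ hX2, mul_comm]
        _ ≤ (3*g/2)/((ad/2)^n) * ‖φ ζ - φ η‖^n := by
            apply mul_le_mul_of_nonneg_left (pow_le_pow_left₀ (by positivity) hBlb n) (by positivity)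
end
end

section
/- Let f ∈ 𝒫₀ be non-constant with f(0) ∈ ℝ and f′(0) > 0, let g be the reduction of f at 0, and write f(z) = Σⱼ aⱼ zʲ and g(z) = Σⱼ bⱼ zʲ for the Taylor series at 0. Then for every integer k ≥ 2: (a₀, …, a_{k−1} are all real and aₖ is not real) if and only if (b₀, …, b_{k−3} are all real and b_{k−2} is not real); that is, reduction reduces the index of the first non-real Taylor coefficient by exactly 2. -/
open Complex Filter Set Topology Asymptotics Metric Polynomial

noncomputable section

section ReductionAux

lemma coeff_ofScalars' (c : ℕ → ℂ) (n : ℕ) :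
    (FormalMultilinearSeries.ofScalars ℂ c).coeff n = c n := by
  simp only [FormalMultilinearSeries.coeff, FormalMultilinearSeries.ofScalars,
    ContinuousMultilinearMap.smul_apply, ContinuousMultilinearMap.mkPiAlgebraFin_apply,
    smul_eq_mul, Pi.one_def, List.ofFn_const, List.prod_replicate, one_pow, mul_one]

lemma coeff_sub' (p q : FormalMultilinearSeries ℂ ℂ ℂ) (n : ℕ) :
    (p - q).coeff n = p.coeff n - q.coeff n := by
  simp only [FormalMultilinearSeries.coeff]
  rfl

lemma iteratedDeriv_eq_coeff' {F : ℂ → ℂ} {p : FormalMultilinearSeries ℂ ℂ ℂ}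
    (hp : HasFPowerSeriesAt F p 0) (n : ℕ) :
    iteratedDeriv n F 0 = (n.factorial : ℂ) * p.coeff n := by
  obtain ⟨r, hr⟩ := hp
  have h := hr.factorial_smul (1 : ℂ) n
  rw [iteratedDeriv_eq_iteratedFDeriv, ← h]
  simp only [FormalMultilinearSeries.coeff, nsmul_eq_mul]
  norm_num

lemma taylorCoeff_eq' {F : ℂ → ℂ} {p : FormalMultilinearSeries ℂ ℂ ℂ}
    (hp : HasFPowerSeriesAt F p 0) (n : ℕ) : taylorCoeff F n = p.coeff n := by
  rw [taylorCoeff, iteratedDeriv_eq_coeff' hp, mul_div_cancel_left₀]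
  exact_mod_cast n.factorial_ne_zero

lemma star_hasFPowerSeriesAt' {F : ℂ → ℂ} {p : FormalMultilinearSeries ℂ ℂ ℂ}
    (hp : HasFPowerSeriesAt F p 0) :
    HasFPowerSeriesAt (fun z => (starRingEnd ℂ) (F ((starRingEnd ℂ) z)))
      (FormalMultilinearSeries.ofScalars ℂ fun n => (starRingEnd ℂ) (p.coeff n)) 0 := by
  rw [hasFPowerSeriesAt_iff] at hp ⊢
  have hc : Continuous (starRingEnd ℂ) := continuous_conj
  have h0 : Filter.Tendsto (starRingEnd ℂ) (𝓝 (0:ℂ)) (𝓝 (0:ℂ)) := by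
    simpa using hc.tendsto 0
  filter_upwards [h0.eventually hp] with z hz
  have h2 := hz.map (starRingEnd ℂ) hc
  simp only [Function.comp_def, smul_eq_mul, map_mul, map_pow, Complex.conj_conj,
    zero_add, coeff_ofScalars'] at h2 ⊢
  exact h2

lemma order_eq_iff_coeffs' {F : ℂ → ℂ} {p : FormalMultilinearSeries ℂ ℂ ℂ}
    (hp : HasFPowerSeriesAt F p 0) (k : ℕ) :
    analyticOrderAt F 0 = (k : ℕ∞) ↔
      (∀ j < k, p.coeff j = 0) ∧ p.coeff k ≠ 0 := by
  have hord : p ≠ 0 → analyticOrderAt F 0 = (p.order : ℕ∞) := by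
    intro hne
    rw [AnalyticAt.analyticOrderAt_eq_natCast ⟨p, hp⟩]
    exact ⟨_, ⟨_, hp.has_fpower_series_iterate_dslope_fslope p.order⟩,
      hp.iterate_dslope_fslope_ne_zero hne,
      by simpa using Filter.Eventually.of_forall (f := 𝓝 (0:ℂ)) hp.eq_pow_order_mul_iterate_dslope⟩
  constructor
  · intro h
    have hne : p ≠ 0 := by
      intro h0
      have h1 : analyticOrderAt F 0 = ⊤ :=
        analyticOrderAt_eq_top.mpr (hp.locally_zero_iff.mpr h0)
      rw [h] at h1
      exact (ENat.coe_ne_top k) h1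
    have h2 := hord hne
    rw [h] at h2
    have hpk : p.order = k := by exact_mod_cast h2.symm
    refine ⟨fun j hj => ?_, ?_⟩
    · rw [FormalMultilinearSeries.coeff_eq_zero]
      exact p.apply_eq_zero_of_lt_order (hpk ▸ hj)
    · rw [Ne, FormalMultilinearSeries.coeff_eq_zero]
      exact hpk ▸ p.apply_order_ne_zero hne
  · rintro ⟨h1, h2⟩
    rw [Ne, FormalMultilinearSeries.coeff_eq_zero] at h2
    have hne : p ≠ 0 := fun h0 => h2 (by rw [h0]; rfl)
    have hle : p.order ≤ k := Nat.sInf_le h2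
    have hge : k ≤ p.order := by
      by_contra hlt
      push_neg at hlt
      exact p.apply_order_ne_zero hne
        ((FormalMultilinearSeries.coeff_eq_zero).mp (h1 _ hlt))
    rw [hord hne, le_antisymm hle hge]

lemma order_shift' {D E w : ℂ → ℂ} (hD : AnalyticAt ℂ D 0) (hE : AnalyticAt ℂ E 0)
    (hw : AnalyticAt ℂ w 0) (hw0 : w 0 ≠ 0)
    (heq : ∀ᶠ z in 𝓝 (0:ℂ), D z = z ^ 2 * w z * E z) (k : ℕ) (hk : 2 ≤ k) :
    analyticOrderAt D 0 = (k : ℕ∞) ↔ analyticOrderAt E 0 = ((k - 2 : ℕ) : ℕ∞) := by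
  obtain ⟨m, rfl⟩ : ∃ m, k = m + 2 := ⟨k - 2, by omega⟩
  simp only [Nat.add_sub_cancel]
  constructor
  · intro hDk
    have hEne : analyticOrderAt E 0 ≠ ⊤ := by
      intro htop
      have hE0 := analyticOrderAt_eq_top.mp htop
      have hD0 : ∀ᶠ z in 𝓝 (0:ℂ), D z = 0 := by
        filter_upwards [heq, hE0] with z hz1 hz2
        rw [hz1, hz2, mul_zero]
      have h1 := analyticOrderAt_eq_top.mpr hD0
      rw [hDk] at h1
      exact (ENat.coe_ne_top (m + 2)) h1
    obtain ⟨m', hm⟩ := WithTop.ne_top_iff_exists.mp hEne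
    obtain ⟨φ, hφa, hφ0, hφeq⟩ := (hE.analyticOrderAt_eq_natCast (n := m')).mp hm.symm
    have hDm : analyticOrderAt D 0 = ((m' + 2 : ℕ) : ℕ∞) := by
      rw [hD.analyticOrderAt_eq_natCast]
      refine ⟨fun z => w z * φ z, hw.mul hφa, mul_ne_zero hw0 hφ0, ?_⟩
      filter_upwards [heq, hφeq] with z hz1 hz2
      rw [hz1, hz2]
      simp only [smul_eq_mul, sub_zero, pow_add]
      ring
    rw [hDk] at hDm
    have hkm : m + 2 = m' + 2 := by exact_mod_cast hDm
    rw [← hm]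
    congr 1
    omega
  · intro hEk
    obtain ⟨φ, hφa, hφ0, hφeq⟩ := (hE.analyticOrderAt_eq_natCast (n := m)).mp hEk
    rw [hD.analyticOrderAt_eq_natCast]
    refine ⟨fun z => w z * φ z, hw.mul hφa, mul_ne_zero hw0 hφ0, ?_⟩
    filter_upwards [heq, hφeq] with z hz1 hz2
    rw [hz1, hz2]
    simp only [smul_eq_mul, sub_zero, pow_add]
    ring

end ReductionAux

/-- reduction lowers the index of the first non-real Taylor coefficient by
exactly `2`. -/
theorem reduction_first_nonreal_coeff
    (f g : ℂ → ℂ) (hf : InPick0 f)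
    (hnc : ¬ ∀ z ∈ UHP, f z = f 0)
    (hre : (f 0).im = 0) (hdim : (deriv f 0).im = 0) (hdre : 0 < (deriv f 0).re)
    (hg : InPick0 g)
    (hgred : ∀ z ∈ UHP, g z = -(f z - f 0)⁻¹ + (deriv f 0 * z)⁻¹)
    (k : ℕ) (hk : 2 ≤ k) :
    ((∀ j < k, (taylorCoeff f j).im = 0) ∧ (taylorCoeff f k).im ≠ 0) ↔
    ((∀ j < k - 2, (taylorCoeff g j).im = 0) ∧ (taylorCoeff g (k - 2)).im ≠ 0) := by
  obtain ⟨hfP, hfA⟩ := hf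
  obtain ⟨hgP, hgA⟩ := hg
  obtain ⟨p, hp⟩ := hfA
  obtain ⟨q, hq⟩ := hgA
  set a₁ : ℂ := deriv f 0 with ha₁def
  have ha₁ : a₁ ≠ 0 := by
    intro h0
    rw [h0] at hdre
    simp at hdre
  have hca₁ : (starRingEnd ℂ) a₁ = a₁ := Complex.conj_eq_iff_im.mpr hdim
  have hcf0 : (starRingEnd ℂ) (f 0) = f 0 := Complex.conj_eq_iff_im.mpr hre
  set u : ℂ → ℂ := dslope f 0 with hudef
  have hu : HasFPowerSeriesAt u p.fslope 0 := hp.has_fpower_series_dslope_fslope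
  have hu0 : u 0 = a₁ := dslope_same f 0
  have hfu : ∀ z : ℂ, f z - f 0 = z * u z := by
    intro z
    rcases eq_or_ne z 0 with rfl | hz
    · simp
    · rw [hudef, dslope_of_ne f hz, slope_def_field]
      field_simp
      ring
  set v : ℂ → ℂ := dslope u 0 with hvdef
  have hv : HasFPowerSeriesAt v p.fslope.fslope 0 := hu.has_fpower_series_dslope_fslope
  have huv : ∀ z : ℂ, u z - a₁ = z * v z := by
    intro z
    rcases eq_or_ne z 0 with rfl | hz
    · simp [hu0]
    · rw [← hu0, hvdef, dslope_of_ne u hz, slope_def_field]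
      field_simp
      ring
  have hau : AnalyticAt ℂ u 0 := ⟨_, hu⟩
  have hav : AnalyticAt ℂ v 0 := ⟨_, hv⟩
  set fs : ℂ → ℂ := fun z => (starRingEnd ℂ) (f ((starRingEnd ℂ) z)) with hfsdef
  set us : ℂ → ℂ := fun z => (starRingEnd ℂ) (u ((starRingEnd ℂ) z)) with husdef
  set vs : ℂ → ℂ := fun z => (starRingEnd ℂ) (v ((starRingEnd ℂ) z)) with hvsdef
  have hfs := star_hasFPowerSeriesAt' hp
  have hus := star_hasFPowerSeriesAt' hu
  have haus : AnalyticAt ℂ us 0 := ⟨_, hus⟩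
  have hus0 : us 0 = a₁ := by
    rw [husdef]
    simp only [map_zero, hu0, hca₁]
  have hfus : ∀ z : ℂ, fs z - f 0 = z * us z := by
    intro z
    have h1 := congrArg (starRingEnd ℂ) (hfu ((starRingEnd ℂ) z))
    simpa only [map_sub, map_mul, Complex.conj_conj, hcf0] using h1
  have huvs : ∀ z : ℂ, us z - a₁ = z * vs z := by
    intro z
    have h1 := congrArg (starRingEnd ℂ) (huv ((starRingEnd ℂ) z))
    simpa only [map_sub, map_mul, Complex.conj_conj, hca₁] using h1
  set h : ℂ → ℂ := fun z => v z / (a₁ * u z) with hhdef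
  have hah : AnalyticAt ℂ h 0 :=
    hav.div (analyticAt_const.mul hau) (by rw [hu0]; exact mul_ne_zero ha₁ ha₁)
  have hune : ∀ᶠ z in 𝓝 (0:ℂ), u z ≠ 0 :=
    hau.continuousAt.eventually_ne (by rw [hu0]; exact ha₁)
  have husne : ∀ᶠ z in 𝓝 (0:ℂ), us z ≠ 0 :=
    haus.continuousAt.eventually_ne (by rw [hus0]; exact ha₁)
  have heq0 : ∀ z : ℂ, z ≠ 0 → u z ≠ 0 →
      -(f z - f 0)⁻¹ + (a₁ * z)⁻¹ = h z := by
    intro z hz huz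
    have h1 := hfu z
    have h2 := huv z
    rw [hhdef, h1]
    field_simp
    linear_combination h2
  have hgh : g =ᶠ[𝓝 (0:ℂ)] h := by
    apply (AnalyticAt.frequently_eq_iff_eventually_eq ⟨q, hq⟩ hah).mp
    have htend : Filter.Tendsto (fun n : ℕ => (((1 / (n + 1 : ℝ) : ℝ)) : ℂ) * Complex.I)
        atTop (𝓝 (0:ℂ)) := by
      have h1 : Filter.Tendsto (fun n : ℕ => (1 / (n + 1 : ℝ))) atTop (𝓝 0) :=
        tendsto_one_div_add_atTop_nhds_zero_nat
      have h2 := (Complex.continuous_ofReal.tendsto 0).comp h1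
      simpa using h2.mul_const Complex.I
    have hne0 : ∀ n : ℕ, (((1 / (n + 1 : ℝ) : ℝ)) : ℂ) * Complex.I ≠ 0 := by
      intro n
      have hpos : (0:ℝ) < 1 / (n + 1 : ℝ) := by positivity
      simp only [ne_eq, mul_eq_zero, Complex.I_ne_zero, or_false, Complex.ofReal_eq_zero]
      exact ne_of_gt hpos
    have hUHP : ∀ n : ℕ, (((1 / (n + 1 : ℝ) : ℝ)) : ℂ) * Complex.I ∈ UHP := by
      intro n
      have hpos : (0:ℝ) < 1 / (n + 1 : ℝ) := by positivity
      show 0 < ((((1 / (n + 1 : ℝ) : ℝ)) : ℂ) * Complex.I).im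
      simp only [Complex.mul_im, Complex.I_im, Complex.I_re, Complex.ofReal_im,
        Complex.ofReal_re, mul_one, mul_zero, zero_mul, add_zero]
      exact hpos
    have htend' : Filter.Tendsto (fun n : ℕ => (((1 / (n + 1 : ℝ) : ℝ)) : ℂ) * Complex.I)
        atTop (𝓝[≠] (0:ℂ)) := by
      apply tendsto_nhdsWithin_of_tendsto_nhds_of_eventually_within _ htend
      filter_upwards with n
      exact hne0 n
    apply htend'.frequently
    apply Filter.Eventually.frequently
    filter_upwards [htend.eventually hune] with n hun
    rw [hgred _ (hUHP n)]
    exact heq0 _ (hne0 n) hun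
  have hhq : HasFPowerSeriesAt h q 0 := hq.congr hgh
  set hs : ℂ → ℂ := fun z => (starRingEnd ℂ) (h ((starRingEnd ℂ) z)) with hhsdef
  have hhs := star_hasFPowerSeriesAt' hhq
  have hDq : HasFPowerSeriesAt (f - fs)
      (p - FormalMultilinearSeries.ofScalars ℂ fun n => (starRingEnd ℂ) (p.coeff n)) 0 :=
    hp.sub hfs
  have hEq : HasFPowerSeriesAt (h - hs)
      (q - FormalMultilinearSeries.ofScalars ℂ fun n => (starRingEnd ℂ) (q.coeff n)) 0 :=
    hhq.sub hhs
  have hDE : ∀ᶠ z in 𝓝 (0:ℂ), (f - fs) z = z ^ 2 * (u z * us z) * ((h - hs) z) := by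
    filter_upwards [hune, husne] with z hu1 hu2
    have e1 := hfu z
    have e2 := hfus z
    have e3 := huv z
    have e4 := huvs z
    have hhsz : hs z = vs z / (a₁ * us z) := by
      rw [hhsdef]
      simp only [hhdef, map_div₀, map_mul, hca₁]
      rfl
    simp only [Pi.sub_apply, hhsz, hhdef]
    have key1 : u z - us z = z * (v z - vs z) := by linear_combination e3 - e4
    have key2 : f z - fs z = z * (u z - us z) := by linear_combination e1 - e2
    have key3 : v z * us z - vs z * u z = a₁ * (v z - vs z) := by
      linear_combination v z * e4 - vs z * e3
    have expand : z ^ 2 * (u z * us z) * (v z / (a₁ * u z) - vs z / (a₁ * us z))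
        = z ^ 2 * ((v z * us z - vs z * u z) / a₁) := by
      field_simp
    rw [expand, key3]
    rw [mul_div_cancel_left₀ _ ha₁]
    linear_combination key2 + z * key1
  have hL := order_eq_iff_coeffs' hDq k
  have hR := order_eq_iff_coeffs' hEq (k - 2)
  have hshift := order_shift' ⟨_, hDq⟩ ⟨_, hEq⟩ (hau.mul haus)
    (by show u 0 * us 0 ≠ 0; rw [hu0, hus0]; exact mul_ne_zero ha₁ ha₁) hDE k hk
  have him : ∀ z : ℂ, (z - (starRingEnd ℂ) z = 0) ↔ z.im = 0 := by
    intro z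
    rw [sub_eq_zero, eq_comm, Complex.conj_eq_iff_im]
  simp only [taylorCoeff_eq' hp, taylorCoeff_eq' hq]
  have hLiff : ((∀ j < k, (p.coeff j).im = 0) ∧ (p.coeff k).im ≠ 0) ↔
      ((∀ j < k, (p - FormalMultilinearSeries.ofScalars ℂ
          fun n => (starRingEnd ℂ) (p.coeff n)).coeff j = 0) ∧
        (p - FormalMultilinearSeries.ofScalars ℂ
          fun n => (starRingEnd ℂ) (p.coeff n)).coeff k ≠ 0) := by
    simp only [coeff_sub', coeff_ofScalars', ne_eq, him]
  have hRiff : ((∀ j < k - 2, (q.coeff j).im = 0) ∧ (q.coeff (k - 2)).im ≠ 0) ↔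
      ((∀ j < k - 2, (q - FormalMultilinearSeries.ofScalars ℂ
          fun n => (starRingEnd ℂ) (q.coeff n)).coeff j = 0) ∧
        (q - FormalMultilinearSeries.ofScalars ℂ
          fun n => (starRingEnd ℂ) (q.coeff n)).coeff (k - 2) ≠ 0) := by
    simp only [coeff_sub', coeff_ofScalars', ne_eq, him]
  rw [hLiff, hRiff, ← hL, ← hR]
  exact hshift
end
end

section
/- Let f ∈ 𝒫₀ be a non-constant rational function with f(0) ∈ ℝ and f′(0) > 0, and let g be the reduction of f at 0. Then g is a rational function with deg g = deg f − 1, and for every x ∈ ℝ ∖ {0} that is a pole of neither f nor g, one has Im g(x) > 0 if and only if Im f(x) > 0. -/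
open Complex Filter Set Topology Asymptotics Metric Polynomial

noncomputable section

lemma UHP_isOpen : IsOpen UHP := by
  have : UHP = Complex.im ⁻¹' (Set.Ioi 0) := rfl
  rw [this]; exact isOpen_Ioi.preimage Complex.continuous_im

lemma eventually_ne_poly (q : Polynomial ℂ) (hq : q ≠ 0) (z0 : ℂ) :
    ∀ᶠ z in 𝓝[≠] z0, q.eval z ≠ 0 := by
  have hfin : ({x | q.IsRoot x} \ {z0}).Finite := (q.finite_setOf_isRoot hq).diff
  have hcl : IsClosed ({x | q.IsRoot x} \ {z0}) := hfin.isClosed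
  have h0 : z0 ∈ ({x | q.IsRoot x} \ {z0})ᶜ := by simp
  have h1 : ∀ᶠ z in 𝓝 z0, z ∈ ({x | q.IsRoot x} \ {z0})ᶜ :=
    hcl.isOpen_compl.eventually_mem h0
  filter_upwards [eventually_nhdsWithin_of_eventually_nhds h1, self_mem_nhdsWithin]
    with z hz hz' hroot
  exact hz ⟨hroot, hz'⟩

lemma qne_of_continuousAt (f : ℂ → ℂ) {p q : Polynomial ℂ} (hco : IsCoprime p q) (hq : q ≠ 0)
    (hrat : ∀ z, f z = p.eval z / q.eval z) (z0 : ℂ) (hc : ContinuousAt f z0) :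
    q.eval z0 ≠ 0 := by
  intro h0
  have hp0 : p.eval z0 ≠ 0 := by
    have h : IsCoprime (p.eval z0) (q.eval z0) := hco.map (Polynomial.evalRingHom z0)
    rw [h0] at h
    exact (isCoprime_zero_right.mp h).ne_zero
  have t1 : Tendsto (fun z => f z * q.eval z) (𝓝[≠] z0) (𝓝 0) := by
    have h5 : Tendsto (fun z => f z * q.eval z) (𝓝[≠] z0) (𝓝 (f z0 * q.eval z0)) :=
      (hc.tendsto.mono_left nhdsWithin_le_nhds).mul
        ((q.continuous.tendsto z0).mono_left nhdsWithin_le_nhds)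
    rwa [h0, mul_zero] at h5
  have t2 : Tendsto (fun z => p.eval z) (𝓝[≠] z0) (𝓝 (p.eval z0)) :=
    (p.continuous.tendsto z0).mono_left nhdsWithin_le_nhds
  have hev : (fun z => f z * q.eval z) =ᶠ[𝓝[≠] z0] fun z => p.eval z := by
    filter_upwards [eventually_ne_poly q hq z0] with z hz
    rw [hrat z, div_mul_cancel₀ _ hz]
  exact hp0 (tendsto_nhds_unique (t1.congr' hev) t2).symm

lemma im_pos_on_UHP (f : ℂ → ℂ) (hfd : DifferentiableOn ℂ f UHP)
    (hge : ∀ z ∈ UHP, 0 ≤ (f z).im)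
    (hc0 : ContinuousAt f 0) (hnc : ¬ ∀ z ∈ UHP, f z = f 0) :
    ∀ z ∈ UHP, 0 < (f z).im := by
  have hUo : IsOpen UHP := UHP_isOpen
  have hconn : IsPreconnected UHP := (convex_halfSpace_im_gt 0).isPreconnected
  have hAnal : AnalyticOnNhd ℂ f UHP := hfd.analyticOnNhd hUo
  rcases hAnal.is_constant_or_isOpen hconn with ⟨w, hw⟩ | hopen
  · exfalso; apply hnc
    have hmemseq : ∀ n : ℕ, Complex.I * ((1/(n+1:ℝ) : ℝ) : ℂ) ∈ UHP := by
      intro n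
      simp only [UHP, Set.mem_setOf_eq, Complex.mul_im, Complex.I_re, Complex.I_im,
        Complex.ofReal_re, Complex.ofReal_im, zero_mul, one_mul, zero_add]
      positivity
    have h0 : Tendsto (fun n : ℕ => (1/(n+1:ℝ))) atTop (𝓝 0) :=
      tendsto_one_div_add_atTop_nhds_zero_nat
    have h1 : Tendsto (fun n : ℕ => ((1/(n+1:ℝ) : ℝ) : ℂ)) atTop (𝓝 0) := by
      have := (Complex.continuous_ofReal.tendsto 0).comp h0
      simpa [Function.comp_def] using this
    have h2 : Tendsto (fun n : ℕ => Complex.I * ((1/(n+1:ℝ) : ℝ) : ℂ)) atTop (𝓝 0) := by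
      have := h1.const_mul Complex.I
      simpa using this
    have hNB : (𝓝[UHP] (0:ℂ)).NeBot := by
      rw [← mem_closure_iff_nhdsWithin_neBot]
      exact mem_closure_of_tendsto h2 (Filter.Eventually.of_forall hmemseq)
    have t1 : Tendsto f (𝓝[UHP] 0) (𝓝 (f 0)) :=
      hc0.continuousWithinAt.tendsto
    have t2 : Tendsto f (𝓝[UHP] 0) (𝓝 w) := by
      apply Tendsto.congr' ?_ tendsto_const_nhds
      filter_upwards [self_mem_nhdsWithin] with z hz
      exact (hw z hz).symm
    have hfw : f 0 = w := tendsto_nhds_unique t1 t2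
    intro z hz; rw [hw z hz, hfw]
  · intro z hz
    rcases lt_or_ge 0 (f z).im with h | h
    · exact h
    exfalso
    have hopen' : IsOpen (f '' UHP) := hopen UHP le_rfl hUo
    rcases Metric.isOpen_iff.mp hopen' (f z) ⟨z, hz, rfl⟩ with ⟨ε, hε, hball⟩
    have hmem : f z - ((ε/2 : ℝ) : ℂ) * Complex.I ∈ Metric.ball (f z) ε := by
      simp only [Metric.mem_ball, dist_eq_norm]
      have : f z - ((ε/2 : ℝ) : ℂ) * Complex.I - f z = -(((ε/2 : ℝ) : ℂ) * Complex.I) := by ring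
      rw [this]
      simp only [norm_neg, norm_mul, Complex.norm_I, mul_one, Complex.norm_real]
      rw [Real.norm_eq_abs, abs_of_pos (by linarith)]
      linarith
    rcases hball hmem with ⟨z', hz', hz'eq⟩
    have hge' := hge z' hz'
    rw [hz'eq] at hge'
    simp only [Complex.sub_im, Complex.mul_im, Complex.ofReal_re, Complex.ofReal_im,
      Complex.I_re, Complex.I_im, mul_one, mul_zero, zero_add] at hge'
    have := hge z hz
    linarith

/-- the reduction of a non-constant rational function in `𝒫₀` is rational of degree
one less, and off the poles it has positive imaginary part at a nonzero real point exactly when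
the original function does. -/
theorem reduction_of_rational
    (f g : ℂ → ℂ) (p q : Polynomial ℂ) (hco : IsCoprime p q) (hq : q ≠ 0)
    (hrat : ∀ z : ℂ, f z = p.eval z / q.eval z)
    (hf : InPick0 f) (hnc : ¬ ∀ z ∈ UHP, f z = f 0)
    (hre : (f 0).im = 0) (hdim : (deriv f 0).im = 0) (hdre : 0 < (deriv f 0).re)
    (hg : InPick0 g)
    (hgred : ∀ z ∈ UHP, g z = -(f z - f 0)⁻¹ + (deriv f 0 * z)⁻¹) :
    ∃ p' q' : Polynomial ℂ, IsCoprime p' q' ∧ q' ≠ 0 ∧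
      max p'.natDegree q'.natDegree = max p.natDegree q.natDegree - 1 ∧
      (∀ z ∈ UHP, g z = p'.eval z / q'.eval z) ∧
      ∀ x : ℝ, x ≠ 0 → q.eval (x : ℂ) ≠ 0 → q'.eval (x : ℂ) ≠ 0 →
        (0 < (p'.eval (x : ℂ) / q'.eval (x : ℂ)).im ↔
          0 < (p.eval (x : ℂ) / q.eval (x : ℂ)).im) := by
  have hUo : IsOpen UHP := UHP_isOpen
  have ha0 : deriv f 0 ≠ 0 := by
    intro h; rw [h] at hdre; simp at hdre
  have hq0 : q.eval 0 ≠ 0 := qne_of_continuousAt f hco hq hrat 0 hf.2.continuousAt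
  set a := deriv f 0 with ha_def
  set f0 := f 0 with hf0_def
  set r : Polynomial ℂ := p - Polynomial.C f0 * q with hr_def
  have hr0 : r.coeff 0 = 0 := by
    rw [Polynomial.coeff_zero_eq_eval_zero]
    simp only [hr_def, Polynomial.eval_sub, Polynomial.eval_mul, Polynomial.eval_C]
    rw [hf0_def, hrat 0]
    field_simp
    simp
  set s : Polynomial ℂ := r.divX with hs_def
  have hrs : Polynomial.X * s = r := by
    have := r.X_mul_divX_add
    rwa [hr0, map_zero, add_zero] at this
  have hds : s.eval 0 = a * q.eval 0 := by
    have hev : (fun z => f z * q.eval z) =ᶠ[𝓝 0] fun z => p.eval z := by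
      have hne : ∀ᶠ z in 𝓝 0, q.eval z ≠ 0 := q.continuous.continuousAt.eventually_ne hq0
      filter_upwards [hne] with z hz
      rw [hrat z, div_mul_cancel₀ _ hz]
    have hd1 : deriv (fun z => f z * q.eval z) 0 = deriv (fun z => p.eval z) 0 := hev.deriv_eq
    have hd2 : deriv (fun z : ℂ => p.eval z) 0 = p.derivative.eval 0 := Polynomial.deriv p
    have hdf : DifferentiableAt ℂ f 0 := hf.2.differentiableAt
    have hdq : DifferentiableAt ℂ (fun z : ℂ => q.eval z) 0 := q.differentiableAt
    have hd3 : deriv (fun z => f z * q.eval z) 0 = a * q.eval 0 + f0 * q.derivative.eval 0 := by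
      rw [deriv_fun_mul hdf hdq, Polynomial.deriv]
    have hkey : p.derivative.eval 0 = a * q.eval 0 + f0 * q.derivative.eval 0 := by
      rw [← hd2, ← hd1, hd3]
    have h1 : s.eval 0 = r.coeff 1 := by
      rw [← Polynomial.coeff_zero_eq_eval_zero, hs_def, Polynomial.coeff_divX]
    have h2 : r.coeff 1 = p.coeff 1 - f0 * q.coeff 1 := by
      simp [hr_def, Polynomial.coeff_sub, Polynomial.coeff_C_mul]
    have h3 : ∀ t : Polynomial ℂ, t.coeff 1 = t.derivative.eval 0 := by
      intro t
      rw [← Polynomial.coeff_zero_eq_eval_zero, Polynomial.coeff_derivative]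
      push_cast; ring
    rw [h1, h2, h3 p, h3 q, hkey]; ring
  have hs0 : s.eval 0 ≠ 0 := by rw [hds]; exact mul_ne_zero ha0 hq0
  have hsne : s ≠ 0 := fun h => hs0 (by simp [h])
  set N : Polynomial ℂ := s - Polynomial.C a * q with hN_def
  have hN0 : N.coeff 0 = 0 := by
    rw [Polynomial.coeff_zero_eq_eval_zero]
    simp only [hN_def, Polynomial.eval_sub, Polynomial.eval_mul, Polynomial.eval_C]
    rw [hds]; ring
  set u : Polynomial ℂ := N.divX with hu_def
  have hNu : Polynomial.X * u = N := by
    have := N.X_mul_divX_add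
    rwa [hN0, map_zero, add_zero] at this
  have hpXs : p = Polynomial.X * s + Polynomial.C f0 * q := by
    rw [hrs, hr_def]; ring
  have him : ∀ z ∈ UHP, 0 < (f z).im :=
    im_pos_on_UHP f hf.1.1 hf.1.2 hf.2.continuousAt hnc
  have hqUHP : ∀ z ∈ UHP, q.eval z ≠ 0 := fun z hz =>
    qne_of_continuousAt f hco hq hrat z
      ((hf.1.1.differentiableAt (hUo.mem_nhds hz)).continuousAt)
  -- the identity for g on UHP
  have hgid : ∀ z ∈ UHP, g z = u.eval z / (Polynomial.C a * s).eval z := by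
    intro z hz
    have hzim : 0 < z.im := hz
    have hzne : (z : ℂ) ≠ 0 := by
      intro h; rw [h] at hzim; simp at hzim
    have hqz := hqUHP z hz
    have hfz : f z - f0 ≠ 0 := by
      intro h
      rw [sub_eq_zero] at h
      have h2 := him z hz
      rw [h, hre] at h2
      exact lt_irrefl _ h2
    have hPz : p.eval z = z * s.eval z + f0 * q.eval z := by
      have := congrArg (Polynomial.eval z) hpXs
      simpa using this
    have hfval : f z - f0 = z * s.eval z / q.eval z := by
      rw [hrat z, hPz]
      field_simp
      ring
    have hsz : s.eval z ≠ 0 := by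
      intro h; rw [hfval, h] at hfz; simp at hfz
    have huz : z * u.eval z = s.eval z - a * q.eval z := by
      have := congrArg (Polynomial.eval z) hNu
      simpa [hN_def] using this
    have huz' : u.eval z = (s.eval z - a * q.eval z) / z := by
      rw [eq_div_iff hzne]; linear_combination huz
    rw [hgred z hz, hfval, huz']
    rw [Polynomial.eval_mul, Polynomial.eval_C]
    field_simp
    ring
  -- coprimality
  have hcop_us : IsCoprime u s := by
    apply EuclideanDomain.isCoprime_of_dvd
    · rintro ⟨-, h⟩; exact hsne h
    · intro d hdnu hdne hdu hds'
      have hdeg : 0 < d.degree :=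
        Polynomial.degree_pos_of_ne_zero_of_nonunit hdne hdnu
      obtain ⟨z0, hz0⟩ := Complex.exists_root hdeg
      have hu0 : u.eval z0 = 0 := hz0.dvd hdu
      have hs0' : s.eval z0 = 0 := hz0.dvd hds'
      have h5 : z0 * u.eval z0 = s.eval z0 - a * q.eval z0 := by
        have := congrArg (Polynomial.eval z0) hNu
        simpa [hN_def] using this
      rw [hu0, hs0', mul_zero] at h5
      have hq0' : q.eval z0 = 0 := by
        have h6 : a * q.eval z0 = 0 := by linear_combination h5
        exact (mul_eq_zero.mp h6).resolve_left ha0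
      have hp0' : p.eval z0 = 0 := by
        rw [hpXs]
        simp [hs0', hq0']
      have h : IsCoprime (p.eval z0) (q.eval z0) := hco.map (Polynomial.evalRingHom z0)
      rw [hp0', hq0'] at h
      exact (isCoprime_zero_right.mp h).ne_zero rfl
  have hcop : IsCoprime u (Polynomial.C a * s) :=
    (isCoprime_mul_unit_left_right (Polynomial.isUnit_C.mpr ha0.isUnit) u s).mpr hcop_us
  -- degrees
  have hn1 : 1 ≤ max p.natDegree q.natDegree := by
    by_contra hcon
    push_neg at hcon
    have hp0d : p.natDegree = 0 := by omega
    have hq0d : q.natDegree = 0 := by omega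
    apply hnc
    intro z hz
    rw [hrat z, hf0_def, hrat 0]
    rw [Polynomial.eq_C_of_natDegree_eq_zero hp0d, Polynomial.eq_C_of_natDegree_eq_zero hq0d]
    simp
  have hrdeg : r.natDegree = 1 + s.natDegree := by
    rw [← hrs, Polynomial.natDegree_mul Polynomial.X_ne_zero hsne, Polynomial.natDegree_X]
  have hrle : r.natDegree ≤ max p.natDegree q.natDegree := by
    refine (Polynomial.natDegree_sub_le p _).trans ?_
    exact max_le_max le_rfl (Polynomial.natDegree_C_mul_le f0 q)
  have hsle : s.natDegree ≤ max p.natDegree q.natDegree - 1 := by omega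
  have hule : u.natDegree ≤ max p.natDegree q.natDegree - 1 := by
    by_cases hu0 : u = 0
    · simp [hu0]
    · have hNd : N.natDegree = 1 + u.natDegree := by
        rw [← hNu, Polynomial.natDegree_mul Polynomial.X_ne_zero hu0, Polynomial.natDegree_X]
      have hNle : N.natDegree ≤ max p.natDegree q.natDegree := by
        refine (Polynomial.natDegree_sub_le s _).trans ?_
        have h7 := Polynomial.natDegree_C_mul_le a q
        have h8 : q.natDegree ≤ max p.natDegree q.natDegree := le_max_right _ _
        omega
      omega
  have hlow : max p.natDegree q.natDegree - 1 ≤ max u.natDegree s.natDegree := by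
    by_cases hcase : s.natDegree = max p.natDegree q.natDegree - 1
    · have := le_max_right u.natDegree s.natDegree
      omega
    · have hqn : q.natDegree = max p.natDegree q.natDegree := by
        by_contra hq'
        have hqlt : q.natDegree < p.natDegree := by omega
        have h6 : (Polynomial.C f0 * q).natDegree < p.natDegree :=
          lt_of_le_of_lt (Polynomial.natDegree_C_mul_le f0 q) hqlt
        have h7 : r.natDegree = p.natDegree :=
          Polynomial.natDegree_sub_eq_left_of_natDegree_lt h6
        omega
      have h7 : (Polynomial.C a * q).natDegree = q.natDegree := Polynomial.natDegree_C_mul ha0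
      have h8 : s.natDegree < (Polynomial.C a * q).natDegree := by omega
      have h9 : N.natDegree = (Polynomial.C a * q).natDegree :=
        Polynomial.natDegree_sub_eq_right_of_natDegree_lt h8
      have hu0 : u ≠ 0 := by
        intro h
        rw [h, mul_zero] at hNu
        rw [← hNu] at h9
        simp only [Polynomial.natDegree_zero] at h9
        omega
      have h10 : N.natDegree = 1 + u.natDegree := by
        rw [← hNu, Polynomial.natDegree_mul Polynomial.X_ne_zero hu0, Polynomial.natDegree_X]
      have := le_max_left u.natDegree s.natDegree
      omega
  refine ⟨u, Polynomial.C a * s, hcop, mul_ne_zero (Polynomial.C_ne_zero.mpr ha0) hsne, ?_, hgid, ?_⟩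
  · rw [Polynomial.natDegree_C_mul ha0]
    exact le_antisymm (max_le hule hsle) hlow
  · intro x hx hqx hq'x
    have hx0 : (x : ℂ) ≠ 0 := Complex.ofReal_ne_zero.mpr hx
    have hsx : s.eval (x : ℂ) ≠ 0 := by
      intro h; apply hq'x; simp [h]
    have hU : (x : ℂ) * u.eval (x : ℂ) = s.eval (x : ℂ) - a * q.eval (x : ℂ) := by
      have := congrArg (Polynomial.eval (x : ℂ)) hNu
      simpa [hN_def] using this
    have hP : p.eval (x : ℂ) = (x : ℂ) * s.eval (x : ℂ) + f0 * q.eval (x : ℂ) := by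
      have := congrArg (Polynomial.eval (x : ℂ)) hpXs
      simpa using this
    have haRe : a = ((a.re : ℝ) : ℂ) := by
      apply Complex.ext <;> simp [hdim]
    have hofr : ∀ (c : ℝ) (w : ℂ), ((c : ℂ) * w).im = c * w.im := fun c w => by
      simp [Complex.mul_im]
    have imdiv : ∀ nn dd : ℂ, dd ≠ 0 →
        (0 < (nn / dd).im ↔ 0 < (nn * (starRingEnd ℂ) dd).im) := by
      intro nn dd hdd
      have hc : (starRingEnd ℂ) dd ≠ 0 := by simpa using hdd
      have h1 : nn / dd = nn * (starRingEnd ℂ) dd / ((Complex.normSq dd : ℝ) : ℂ) := by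
        rw [← Complex.mul_conj, mul_div_mul_right _ _ hc]
      have hnsq : 0 < Complex.normSq dd := Complex.normSq_pos.mpr hdd
      rw [h1, Complex.div_ofReal_im]
      constructor
      · intro h
        have h9 := mul_pos h hnsq
        rwa [div_mul_cancel₀ _ (ne_of_gt hnsq)] at h9
      · intro h; exact div_pos h hnsq
    have hq'xval : (Polynomial.C a * s).eval (x : ℂ) = a * s.eval (x : ℂ) := by simp
    rw [hq'xval, imdiv _ _ (by rw [← hq'xval]; exact hq'x), imdiv _ _ hqx]
    set S := s.eval (x : ℂ)
    set Q := q.eval (x : ℂ)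
    set U := u.eval (x : ℂ)
    set t := (S * (starRingEnd ℂ) Q).im with ht
    have key1 : (p.eval (x : ℂ) * (starRingEnd ℂ) Q).im = x * t := by
      have hcomp : p.eval (x : ℂ) * (starRingEnd ℂ) Q
          = (x : ℂ) * (S * (starRingEnd ℂ) Q) + f0 * ((Complex.normSq Q : ℝ) : ℂ) := by
        rw [hP, ← Complex.mul_conj]
        ring
      have e0 : (f0 * ((Complex.normSq Q : ℝ) : ℂ)).im = 0 := by
        rw [Complex.mul_im, Complex.ofReal_im, hre]; ring
      rw [hcomp, Complex.add_im, hofr, e0]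
      ring
    have key2 : (x : ℝ) * (U * (starRingEnd ℂ) (a * S)).im = a.re ^ 2 * t := by
      have hSS : S * (starRingEnd ℂ) S = ((Complex.normSq S : ℝ) : ℂ) := Complex.mul_conj S
      have haR : (starRingEnd ℂ) a = a := Complex.conj_eq_iff_im.mpr hdim
      have h1 : (x : ℂ) * (U * (starRingEnd ℂ) (a * S))
          = a * ((Complex.normSq S : ℝ) : ℂ)
            - a ^ 2 * ((starRingEnd ℂ) S * Q) := by
        rw [map_mul, haR]
        linear_combination (a * (starRingEnd ℂ) S) * hU + a * hSS
      have h2 := congrArg Complex.im h1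
      have h3 : ((starRingEnd ℂ) S * Q).im = -t := by
        have : (starRingEnd ℂ) S * Q = (starRingEnd ℂ) (S * (starRingEnd ℂ) Q) := by
          rw [map_mul, Complex.conj_conj]
        rw [this, Complex.conj_im, ht]
      rw [hofr] at h2
      rw [h2, Complex.sub_im]
      have e1 : (a * ((Complex.normSq S : ℝ) : ℂ)).im = 0 := by
        rw [Complex.mul_im, Complex.ofReal_im, hdim]; ring
      have e2 : (a ^ 2 * ((starRingEnd ℂ) S * Q)).im = a.re ^ 2 * (-t) := by
        rw [haRe]
        rw [show (((a.re : ℝ) : ℂ)) ^ 2 = (((a.re ^ 2 : ℝ)) : ℂ) by push_cast; ring]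
        rw [hofr, h3]
        simp [Complex.ofReal_re]
      rw [e1, e2]; ring
    have hx2 : (0 : ℝ) < x ^ 2 := by positivity
    have har2 : (0 : ℝ) < a.re ^ 2 := by positivity
    have h3 : a.re ^ 2 * (x * t) = x ^ 2 * (U * (starRingEnd ℂ) (a * S)).im := by
      calc a.re ^ 2 * (x * t) = x * (a.re ^ 2 * t) := by ring
        _ = x * ((x : ℝ) * (U * (starRingEnd ℂ) (a * S)).im) := by rw [← key2]
        _ = x ^ 2 * (U * (starRingEnd ℂ) (a * S)).im := by ring
    rw [key1]
    constructor
    · intro h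
      nlinarith [mul_pos hx2 h, h3, har2]
    · intro h
      nlinarith [mul_pos har2 h, h3, hx2]
end
end
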